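/- arXiv:1006.2541 — 4 statements merged into one kernel-verified Lean document; each statement's English description precedes it below -/
import Mathlib

section
/- Let Ω be a set and let H be a linear space of real-valued functions on Ω containing all constant functions. Let E : H → ℝ be a sublinear expectation, i.e. E is monotone (X ≥ Y pointwise implies E[X] ≥ E[Y]), E[c] = c for every constant function c, subadditive (E[X + Y] ≤ E[X] + E[Y] for all X, Y ∈ H), and positively homogeneous (E[λX] = λE[X] for all λ ≥ 0, X ∈ H). Then for every X ∈ H there exists a linear functional L : H → ℝ such that L is monotone, L[1] = 1, L[Y] ≤ E[Y] for all Y ∈ H, and L[X] = E[X]. Consequently E[X] = max over the family of all monotone linear functionals dominated by E of their value at X. -/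
/-- **Representation theorem for sublinear expectations.**
Let `H` be a linear space of real functions on `Ω` containing the constants, and let
`E : H → ℝ` be a sublinear expectation (monotone, constant-preserving, subadditive,
positively homogeneous).  Then for each `X ∈ H` the value `E X` is the maximum of `L X`
over all monotone linear functionals `L` on `H` with `L 1 = 1` dominated by `E`. -/
theorem sublinear_expectation_representation
    {Ω : Type*} (H : Submodule ℝ (Ω → ℝ))
    (hconstH : ∀ c : ℝ, (fun _ : Ω => c) ∈ H)
    (E : H → ℝ)
    (hmono : ∀ X Y : H, (∀ ω, (Y : Ω → ℝ) ω ≤ (X : Ω → ℝ) ω) → E Y ≤ E X)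
    (hconst : ∀ c : ℝ, E ⟨fun _ => c, hconstH c⟩ = c)
    (hsub : ∀ X Y : H, E (X + Y) ≤ E X + E Y)
    (hpos : ∀ (X : H) (l : ℝ), 0 ≤ l → E (l • X) = l * E X)
    (X : H) :
    IsGreatest
      {r : ℝ | ∃ L : H →ₗ[ℝ] ℝ,
        (∀ Y Z : H, (∀ ω, (Z : Ω → ℝ) ω ≤ (Y : Ω → ℝ) ω) → L Z ≤ L Y) ∧
        L ⟨fun _ => 1, hconstH 1⟩ = 1 ∧
        (∀ Y : H, L Y ≤ E Y) ∧
        r = L X}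
      (E X) := by
  -- E of the zero element is zero
  have hE0 : E 0 = 0 := by
    have h := hpos X 0 le_rfl
    rwa [zero_smul, zero_mul] at h
  -- key inequality: c * E X ≤ E (c • X) for all real c
  have hkey : ∀ c : ℝ, c * E X ≤ E (c • X) := by
    intro c
    rcases le_or_gt 0 c with hc | hc
    · rw [hpos X c hc]
    · have h1 : E ((-c) • X) = (-c) * E X := hpos X (-c) (by linarith)
      have h2 : E (c • X + (-c) • X) ≤ E (c • X) + E ((-c) • X) := hsub _ _
      have h3 : c • X + (-c) • X = 0 := by
        rw [← add_smul]; simp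
      rw [h3, hE0, h1] at h2
      linarith
  -- partial linear map on the span of X sending X to E X
  have hwd : ∀ c : ℝ, c • X = 0 → c • (E X) = 0 := by
    intro c hc
    rcases eq_or_ne c 0 with h | h
    · simp [h]
    · have hX0 : X = 0 := by
        have := congrArg (fun v => c⁻¹ • v) hc
        simpa [smul_smul, inv_mul_cancel₀ h] using this
      simp [hX0, hE0]
  set f : ↥H →ₗ.[ℝ] ℝ :=
    LinearPMap.mkSpanSingleton' X (E X) hwd with hf_def
  have hdom : f.domain = (ℝ ∙ X : Submodule ℝ H) :=
    LinearPMap.domain_mkSpanSingleton X (E X) hwd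
  -- Hahn–Banach extension
  obtain ⟨g, hgf, hgE⟩ :=
    exists_extension_of_le_sublinear f E
      (fun c hc x => hpos x c hc.le) hsub
      (by
        rintro ⟨x, hx⟩
        have hx' : x ∈ (ℝ ∙ X : Submodule ℝ H) := hdom ▸ hx
        rcases Submodule.mem_span_singleton.mp hx' with ⟨c, rfl⟩
        have := LinearPMap.mkSpanSingleton'_apply (σ := RingHom.id ℝ) X (E X) hwd c (hdom ▸ hx)
        calc f ⟨c • X, hx⟩ = c • E X := this
          _ ≤ E (c • X) := hkey c)
  -- g X = E X
  have hXmem : X ∈ f.domain := by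
    rw [hdom]; exact Submodule.mem_span_singleton_self X
  have hgX : g X = E X := by
    have := hgf ⟨X, hXmem⟩
    rw [this, LinearPMap.mkSpanSingleton'_apply_self]
  -- g is monotone
  have hgmono : ∀ Y Z : H, (∀ ω, (Z : Ω → ℝ) ω ≤ (Y : Ω → ℝ) ω) → g Z ≤ g Y := by
    intro Y Z hZY
    have h1 : g (Z - Y) ≤ E (Z - Y) := hgE _
    have h2 : E (Z - Y) ≤ E 0 := by
      apply hmono
      intro ω
      have := hZY ω
      simp only [Submodule.coe_sub, Pi.sub_apply, ZeroMemClass.coe_zero, Pi.zero_apply]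
      linarith
    rw [hE0] at h2
    have := h1.trans h2
    rw [map_sub] at this
    linarith
  -- g 1 = 1
  have hg1 : g ⟨fun _ => 1, hconstH 1⟩ = 1 := by
    have h1 : g ⟨fun _ => 1, hconstH 1⟩ ≤ 1 := by
      have := hgE ⟨fun _ => 1, hconstH 1⟩
      rwa [hconst 1] at this
    have h2 : g (-(⟨fun _ => 1, hconstH 1⟩ : H)) ≤ -1 := by
      have heq : (-(⟨fun _ => 1, hconstH 1⟩ : H)) = ⟨fun _ => (-1 : ℝ), hconstH (-1)⟩ := by
        ext ω; simp
      have := hgE (-(⟨fun _ => 1, hconstH 1⟩ : H))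
      rwa [heq, hconst (-1)] at this
    rw [map_neg] at h2
    linarith
  constructor
  · exact ⟨g, hgmono, hg1, hgE, hgX.symm⟩
  · rintro r ⟨L, -, -, hLE, rfl⟩
    exact hLE X
end

section
/- Let Ω be a complete separable metric space and let 𝒫 be a nonempty set of Borel probability measures on Ω. The upper expectation 𝔼[X] := sup_{P ∈ 𝒫} ∫ X dP is regular on C_b(Ω) — meaning that for every sequence (X_n) of bounded continuous real functions on Ω with X_n(ω) decreasing to 0 for every ω ∈ Ω, one has 𝔼[X_n] ↓ 0 — if and only if 𝒫 is relatively compact in the space of Borel probability measures on Ω equipped with the topology of weak convergence (i.e. the closure of 𝒫 is compact). -/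
open MeasureTheory Filter Topology BoundedContinuousFunction NNReal ENNReal

noncomputable section UERIC

namespace UERIC

open Set

set_option linter.unusedSectionVars false

variable {Ω : Type*} [MetricSpace Ω] [MeasurableSpace Ω] [BorelSpace Ω]

/-- Integral pairing between a bounded continuous function and a probability measure. -/
def Ig (f : Ω →ᵇ ℝ) (Q : ProbabilityMeasure Ω) : ℝ := ∫ ω, f ω ∂(Q : Measure Ω)

lemma Ig_continuous (f : Ω →ᵇ ℝ) : Continuous (Ig (Ω := Ω) f) :=
  ProbabilityMeasure.continuous_integral_boundedContinuousFunction f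

lemma abs_Ig_le (f : Ω →ᵇ ℝ) (Q : ProbabilityMeasure Ω) : |Ig f Q| ≤ ‖f‖ := by
  have := f.norm_integral_le_norm (μ := (Q : Measure Ω))
  simpa [Ig, Real.norm_eq_abs] using this

lemma Ig_mono {f g : Ω →ᵇ ℝ} (h : ∀ x, f x ≤ g x) (Q : ProbabilityMeasure Ω) :
    Ig f Q ≤ Ig g Q :=
  integral_mono (f.integrable _) (g.integrable _) h

lemma Ig_add (f g : Ω →ᵇ ℝ) (Q : ProbabilityMeasure Ω) :
    Ig (f + g) Q = Ig f Q + Ig g Q := by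
  simp only [Ig, BoundedContinuousFunction.coe_add, Pi.add_apply]
  exact integral_add (f.integrable _) (g.integrable _)

lemma Ig_smul (c : ℝ) (f : Ω →ᵇ ℝ) (Q : ProbabilityMeasure Ω) :
    Ig (c • f) Q = c * Ig f Q := by
  simp only [Ig, BoundedContinuousFunction.coe_smul, Pi.smul_apply, smul_eq_mul]
  exact integral_const_mul c _

lemma Ig_one (Q : ProbabilityMeasure Ω) : Ig (1 : Ω →ᵇ ℝ) Q = 1 := by
  simp [Ig]

lemma Ig_nonneg {f : Ω →ᵇ ℝ} (h : ∀ x, 0 ≤ f x) (Q : ProbabilityMeasure Ω) : 0 ≤ Ig f Q :=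
  integral_nonneg h

/-- measure of a set is at most the integral of a function dominating its indicator. -/
lemma meas_le_integral {μ : Measure Ω} [IsProbabilityMeasure μ] {f : Ω →ᵇ ℝ} {S : Set Ω}
    (hS : MeasurableSet S) (h0 : ∀ x, 0 ≤ f x) (h1 : ∀ x ∈ S, 1 ≤ f x) :
    (μ S).toReal ≤ ∫ x, f x ∂μ := by
  have hind : ∫ x, S.indicator (fun _ => (1:ℝ)) x ∂μ = (μ S).toReal • (1:ℝ) :=
    integral_indicator_const (1:ℝ) hS
  rw [smul_eq_mul, mul_one] at hind
  rw [← hind]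
  refine integral_mono ((integrable_const (1:ℝ)).indicator hS) (f.integrable μ) ?_
  intro x
  by_cases hx : x ∈ S
  · simpa [Set.indicator_of_mem hx] using h1 x hx
  · simpa [Set.indicator_of_notMem hx] using h0 x

/-- the integral of a function vanishing off `S`, bounded by `1`, is at most the measure. -/
lemma integral_le_meas {μ : Measure Ω} [IsProbabilityMeasure μ] {f : Ω →ᵇ ℝ} {S : Set Ω}
    (hS : MeasurableSet S) (h1 : ∀ x, f x ≤ 1) (h0 : ∀ x ∉ S, f x ≤ 0) :
    ∫ x, f x ∂μ ≤ (μ S).toReal := by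
  have hind : ∫ x, S.indicator (fun _ => (1:ℝ)) x ∂μ = (μ S).toReal • (1:ℝ) :=
    integral_indicator_const (1:ℝ) hS
  rw [smul_eq_mul, mul_one] at hind
  rw [← hind]
  refine integral_mono (f.integrable μ) ((integrable_const (1:ℝ)).indicator hS) ?_
  intro x
  by_cases hx : x ∈ S
  · simpa [Set.indicator_of_mem hx] using h1 x
  · simpa [Set.indicator_of_notMem hx] using h0 x hx

section Ultra

variable (F : Ultrafilter (ProbabilityMeasure Ω))

lemma exists_Ltend (f : Ω →ᵇ ℝ) : ∃ x : ℝ, Tendsto (Ig f) F (𝓝 x) := by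
  obtain ⟨x, -, hx⟩ := (isCompact_Icc (a := -‖f‖) (b := ‖f‖)).ultrafilter_le_nhds
    (F.map (Ig f)) (le_principal_iff.2 <| by
      refine Filter.mem_map.2 ?_
      filter_upwards [Filter.univ_mem] with Q _
      exact abs_le.1 (abs_Ig_le f Q))
  exact ⟨x, hx⟩

/-- The limit of integration against `f` along the ultrafilter `F`. -/
def Lfun (f : Ω →ᵇ ℝ) : ℝ := (exists_Ltend F f).choose

lemma Ltend (f : Ω →ᵇ ℝ) : Tendsto (Ig f) F (𝓝 (Lfun F f)) := (exists_Ltend F f).choose_spec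

lemma Lfun_one : Lfun F (1 : Ω →ᵇ ℝ) = 1 := by
  refine tendsto_nhds_unique (Ltend F 1) ?_
  have h : Ig (1 : Ω →ᵇ ℝ) = fun _ => (1:ℝ) := funext fun Q => Ig_one Q
  rw [h]
  exact tendsto_const_nhds

lemma Lfun_add (f g : Ω →ᵇ ℝ) : Lfun F (f + g) = Lfun F f + Lfun F g := by
  refine tendsto_nhds_unique (Ltend F (f + g)) ?_
  have := (Ltend F f).add (Ltend F g)
  simpa [funext fun Q => Ig_add f g Q] using this

lemma Lfun_smul (c : ℝ) (f : Ω →ᵇ ℝ) : Lfun F (c • f) = c * Lfun F f := by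
  refine tendsto_nhds_unique (Ltend F (c • f)) ?_
  have := (Ltend F f).const_mul c
  simpa [funext fun Q => Ig_smul c f Q] using this

lemma Lfun_mono {f g : Ω →ᵇ ℝ} (h : ∀ x, f x ≤ g x) : Lfun F f ≤ Lfun F g :=
  le_of_tendsto_of_tendsto (Ltend F f) (Ltend F g) (Eventually.of_forall fun Q => Ig_mono h Q)

lemma Lfun_nonneg {f : Ω →ᵇ ℝ} (h : ∀ x, 0 ≤ f x) : 0 ≤ Lfun F f := by
  have := Lfun_mono F (f := 0) (g := f) (by simpa using h)
  calc (0:ℝ) = Lfun F (0 : Ω →ᵇ ℝ) := by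
        simpa using (Lfun_smul F 0 0).symm
    _ ≤ Lfun F f := this

/-- The candidate functions for the Riesz content of a set `K`. -/
def cand (K : Set Ω) : Set (Ω →ᵇ ℝ) := {f | (∀ x, 0 ≤ f x) ∧ ∀ x ∈ K, 1 ≤ f x}

lemma one_mem_cand (K : Set Ω) : (1 : Ω →ᵇ ℝ) ∈ cand K := by
  constructor <;> intros <;> simp

/-- The Riesz content associated to `Lfun F`. -/
def LK (K : Set Ω) : ℝ := sInf (Lfun F '' cand K)

lemma LK_bddBelow (K : Set Ω) : BddBelow (Lfun F '' cand K) := by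
  refine ⟨0, ?_⟩
  rintro x ⟨f, hf, rfl⟩
  exact Lfun_nonneg F hf.1

lemma LK_nonneg (K : Set Ω) : 0 ≤ LK F K := by
  refine le_csInf ?_ ?_
  · exact ⟨_, ⟨1, one_mem_cand K, rfl⟩⟩
  · rintro x ⟨f, hf, rfl⟩
    exact Lfun_nonneg F hf.1

lemma LK_le (K : Set Ω) {f : Ω →ᵇ ℝ} (hf : f ∈ cand K) : LK F K ≤ Lfun F f :=
  csInf_le (LK_bddBelow F K) ⟨f, hf, rfl⟩

lemma LK_le_one (K : Set Ω) : LK F K ≤ 1 := by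
  simpa [Lfun_one] using LK_le F K (one_mem_cand K)

lemma LK_mono {K₁ K₂ : Set Ω} (h : K₁ ⊆ K₂) : LK F K₁ ≤ LK F K₂ := by
  refine le_csInf ⟨_, ⟨1, one_mem_cand K₂, rfl⟩⟩ ?_
  rintro x ⟨f, hf, rfl⟩
  exact LK_le F K₁ ⟨hf.1, fun x hx => hf.2 x (h hx)⟩

lemma LK_union_le (K₁ K₂ : Set Ω) : LK F (K₁ ∪ K₂) ≤ LK F K₁ + LK F K₂ := by
  refine le_of_forall_pos_le_add fun ε hε => ?_
  have hne₁ : (Lfun F '' cand K₁).Nonempty := ⟨_, ⟨1, one_mem_cand K₁, rfl⟩⟩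
  have hne₂ : (Lfun F '' cand K₂).Nonempty := ⟨_, ⟨1, one_mem_cand K₂, rfl⟩⟩
  obtain ⟨a, ⟨f₁, hf₁, rfl⟩, ha⟩ := exists_lt_of_csInf_lt hne₁
    (lt_add_of_pos_right (LK F K₁) (half_pos hε))
  obtain ⟨b, ⟨f₂, hf₂, rfl⟩, hb⟩ := exists_lt_of_csInf_lt hne₂
    (lt_add_of_pos_right (LK F K₂) (half_pos hε))
  have hmem : f₁ + f₂ ∈ cand (K₁ ∪ K₂) := by
    constructor
    · intro x
      simpa using add_nonneg (hf₁.1 x) (hf₂.1 x)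
    · rintro x (hx | hx)
      · have := add_le_add (hf₁.2 x hx) (hf₂.1 x)
        simpa using this
      · have := add_le_add (hf₁.1 x) (hf₂.2 x hx)
        simpa using this
  calc LK F (K₁ ∪ K₂) ≤ Lfun F (f₁ + f₂) := LK_le F _ hmem
    _ = Lfun F f₁ + Lfun F f₂ := Lfun_add F f₁ f₂
    _ ≤ (LK F K₁ + ε/2) + (LK F K₂ + ε/2) := add_le_add ha.le hb.le
    _ = LK F K₁ + LK F K₂ + ε := by ring

lemma LK_union_disjoint {K₁ K₂ : Set Ω} (hd : Disjoint K₁ K₂)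
    (h₁ : IsClosed K₁) (h₂ : IsClosed K₂) :
    LK F (K₁ ∪ K₂) = LK F K₁ + LK F K₂ := by
  refine le_antisymm (LK_union_le F K₁ K₂) ?_
  obtain ⟨g, hg₂, hg₁, hg01⟩ := exists_continuous_zero_one_of_isClosed h₂ h₁ hd.symm
  have hb : ∀ x y : Ω, dist (g x) (g y) ≤ 1 := by
    intro x y
    rw [Real.dist_eq]
    have hx := hg01 x
    have hy := hg01 y
    rw [abs_sub_le_iff]
    constructor <;> linarith [hx.1, hx.2, hy.1, hy.2]
  set gb : Ω →ᵇ ℝ := BoundedContinuousFunction.mkOfBound g 1 hb with hgb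
  have hgbapp : ∀ x, gb x = g x := fun _ => rfl
  refine le_csInf ⟨_, ⟨1, one_mem_cand _, rfl⟩⟩ ?_
  rintro x ⟨f, hf, rfl⟩
  have hmem₁ : f * gb ∈ cand K₁ := by
    constructor
    · intro x
      simpa [hgbapp] using mul_nonneg (hf.1 x) (hg01 x).1
    · intro x hx
      have : gb x = 1 := hg₁ hx
      simp only [BoundedContinuousFunction.coe_mul, Pi.mul_apply, this, mul_one]
      exact hf.2 x (Or.inl hx)
  have hmem₂ : f * (1 - gb) ∈ cand K₂ := by
    constructor
    · intro x
      have : (0:ℝ) ≤ 1 - gb x := by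
        have := (hg01 x).2
        simpa [hgbapp] using by linarith
      simpa using mul_nonneg (hf.1 x) this
    · intro x hx
      have hgx : gb x = 0 := hg₂ hx
      simp only [BoundedContinuousFunction.coe_mul, Pi.mul_apply,
        BoundedContinuousFunction.coe_sub, BoundedContinuousFunction.coe_one, Pi.sub_apply,
        Pi.one_apply, hgx, sub_zero, mul_one]
      exact hf.2 x (Or.inr hx)
  have hsum : f * gb + f * (1 - gb) = f := by
    ring
  calc LK F K₁ + LK F K₂ ≤ Lfun F (f * gb) + Lfun F (f * (1 - gb)) :=
        add_le_add (LK_le F _ hmem₁) (LK_le F _ hmem₂)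
    _ = Lfun F (f * gb + f * (1 - gb)) := (Lfun_add F _ _).symm
    _ = Lfun F f := by rw [hsum]

/-- The content associated to the ultrafilter limit functional. -/
def cont : Content Ω where
  toFun K := Real.toNNReal (LK F K)
  mono' K₁ K₂ h := Real.toNNReal_mono (LK_mono F h)
  sup_disjoint' K₁ K₂ hd hc₁ hc₂ := by
    have h := LK_union_disjoint F hd hc₁ hc₂
    have := Real.toNNReal_add (LK_nonneg F K₁) (LK_nonneg F K₂)
    simp only [TopologicalSpace.Compacts.coe_sup]
    rw [h, this]
  sup_le' K₁ K₂ := by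
    have h := LK_union_le F (K₁ : Set Ω) K₂
    have h' : Real.toNNReal (LK F ((K₁ : Set Ω) ∪ K₂)) ≤
        Real.toNNReal (LK F K₁) + Real.toNNReal (LK F K₂) := by
      rw [← Real.toNNReal_add (LK_nonneg F K₁) (LK_nonneg F K₂)]
      exact Real.toNNReal_mono (h.trans (le_of_eq rfl))
    simpa using h'

/-- The limit measure. -/
def limMeas : Measure Ω := (cont F).measure

lemma limMeas_open_le {U : Set Ω} (hU : IsOpen U) {c : ℝ}
    (hc : ∀ K : Set Ω, IsCompact K → K ⊆ U → LK F K ≤ c) (hc0 : 0 ≤ c) :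
    limMeas F U ≤ ENNReal.ofReal c := by
  rw [limMeas, Content.measure_apply _ hU.measurableSet,
    Content.outerMeasure_of_isOpen _ U hU]
  simp only [Content.innerContent]
  refine iSup₂_le fun K hK => ?_
  show ENNReal.ofReal (LK F (K : Set Ω)) ≤ ENNReal.ofReal c
  exact ENNReal.ofReal_le_ofReal (hc K K.2 hK)


lemma le_limMeas_open {U : Set Ω} (hU : IsOpen U) {K : Set Ω} (hK : IsCompact K)
    (hKU : K ⊆ U) : (ENNReal.ofReal (LK F K)) ≤ limMeas F U := by
  rw [limMeas, Content.measure_apply _ hU.measurableSet,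
    Content.outerMeasure_of_isOpen _ U hU]
  simp only [Content.innerContent]
  refine le_trans ?_ (le_iSup₂ (⟨K, hK⟩ : TopologicalSpace.Compacts Ω) hKU)
  exact le_rfl


lemma limMeas_univ_le_one : limMeas F univ ≤ 1 := by
  have := limMeas_open_le F isOpen_univ (c := 1) (fun K _ _ => LK_le_one F K) zero_le_one
  simpa using this

/-- The staircase identity for clamped layers. -/
lemma sum_clamp (t : ℝ) (ht : 0 ≤ t) :
    ∀ N : ℕ, ∑ i ∈ Finset.range N, min 1 (max 0 (t - (i:ℝ))) = min t (N:ℝ) := by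
  intro N
  induction N with
  | zero => simp [min_eq_right ht]
  | succ n ih =>
    rw [Finset.sum_range_succ, ih]
    push_cast
    rcases le_total t n with h | h
    · have hmax : max 0 (t - (n:ℝ)) = 0 := max_eq_left (by linarith)
      rw [min_eq_left h, hmax, min_eq_right zero_le_one,
        min_eq_left (by linarith : t ≤ (n:ℝ) + 1)]
      ring
    · rcases le_total t ((n:ℝ) + 1) with h' | h'
      · have hmax : max 0 (t - (n:ℝ)) = t - n := max_eq_right (by linarith)
        rw [min_eq_right h, hmax, min_eq_right (by linarith : t - (n:ℝ) ≤ 1),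
          min_eq_left h']
        ring
      · have hmax : max 0 (t - (n:ℝ)) = t - n := max_eq_right (by linarith)
        rw [min_eq_right h, hmax, min_eq_left (by linarith : (1:ℝ) ≤ t - n),
          min_eq_right h']

/-- The `i`-th layer function of `f` at resolution `N`. -/
def layer (f : Ω →ᵇ ℝ) (N i : ℕ) : Ω →ᵇ ℝ :=
  BoundedContinuousFunction.mkOfBound
    ⟨fun x => min 1 (max 0 ((N:ℝ) * f x - (i:ℝ))),
      (continuous_const.min (continuous_const.max
        ((continuous_const.mul f.continuous).sub continuous_const)))⟩ 1
    (by
      intro x y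
      rw [Real.dist_eq]
      have h1 : ∀ z : Ω, (0:ℝ) ≤ min 1 (max 0 ((N:ℝ) * f z - (i:ℝ))) := fun z =>
        le_min zero_le_one (le_max_left _ _)
      have h2 : ∀ z : Ω, min 1 (max 0 ((N:ℝ) * f z - (i:ℝ))) ≤ 1 := fun z => min_le_left _ _
      rw [abs_sub_le_iff]
      constructor <;> simp only [ContinuousMap.coe_mk] <;> linarith [h1 x, h2 x, h1 y, h2 y])

lemma layer_apply (f : Ω →ᵇ ℝ) (N i : ℕ) (x : Ω) :
    layer f N i x = min 1 (max 0 ((N:ℝ) * f x - (i:ℝ))) := rfl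

lemma layer_nonneg (f : Ω →ᵇ ℝ) (N i : ℕ) (x : Ω) : 0 ≤ layer f N i x :=
  le_min zero_le_one (le_max_left _ _)

lemma layer_le_one (f : Ω →ᵇ ℝ) (N i : ℕ) (x : Ω) : layer f N i x ≤ 1 := min_le_left _ _

lemma layer_sum (f : Ω →ᵇ ℝ) (hf : ∀ x, 0 ≤ f x) (N : ℕ) (hN : ∀ x, f x ≤ 1) (x : Ω) :
    ∑ i ∈ Finset.range N, layer f N i x = (N:ℝ) * f x := by
  have h := sum_clamp ((N:ℝ) * f x) (mul_nonneg (Nat.cast_nonneg N) (hf x)) N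
  simp only [layer_apply]
  rw [h, min_eq_left]
  calc (N:ℝ) * f x ≤ (N:ℝ) * 1 :=
        mul_le_mul_of_nonneg_left (hN x) (Nat.cast_nonneg N)
    _ = (N:ℝ) := mul_one _

lemma Lfun_zero : Lfun F (0 : Ω →ᵇ ℝ) = 0 := by
  have := Lfun_smul F 0 (0 : Ω →ᵇ ℝ)
  simpa using this

lemma Lfun_sum {ι : Type*} (s : Finset ι) (g : ι → Ω →ᵇ ℝ) :
    Lfun F (∑ i ∈ s, g i) = ∑ i ∈ s, Lfun F (g i) := by
  classical
  induction s using Finset.induction with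
  | empty => simpa using Lfun_zero F
  | insert _ _ hx ih =>
    rw [Finset.sum_insert hx, Finset.sum_insert hx, Lfun_add, ih]

lemma Ig_sum {ι : Type*} (s : Finset ι) (g : ι → Ω →ᵇ ℝ) (Q : ProbabilityMeasure Ω) :
    Ig (∑ i ∈ s, g i) Q = ∑ i ∈ s, Ig (g i) Q := by
  classical
  induction s using Finset.induction with
  | empty => simp [Ig]
  | insert _ _ hx ih =>
    rw [Finset.sum_insert hx, Finset.sum_insert hx, Ig_add, ih]

/-- The limit probability measure, assuming the total mass is 1. -/
def Qlim [IsProbabilityMeasure (limMeas F)] : ProbabilityMeasure Ω :=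
  ⟨limMeas F, inferInstance⟩

lemma Qlim_coe [IsProbabilityMeasure (limMeas F)] : (Qlim F : Measure Ω) = limMeas F := rfl

lemma Ig_layer_succ_le [IsProbabilityMeasure (limMeas F)] (f : Ω →ᵇ ℝ) (N i : ℕ) :
    Ig (layer f N (i + 1)) (Qlim F) ≤ Lfun F (layer f N i) := by
  set S : Set Ω := {x | ((i:ℝ) + 1) < (N:ℝ) * f x} with hS
  have hSopen : IsOpen S := isOpen_lt continuous_const (continuous_const.mul f.continuous)
  have h1 : Ig (layer f N (i + 1)) (Qlim F) ≤ ((limMeas F) S).toReal := by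
    rw [Ig, Qlim_coe]
    refine integral_le_meas hSopen.measurableSet (fun x => layer_le_one f N _ x) ?_
    intro x hx
    have hx' : (N:ℝ) * f x ≤ (i:ℝ) + 1 := le_of_not_gt hx
    rw [layer_apply]
    push_cast
    have : max 0 ((N:ℝ) * f x - ((i:ℝ) + 1)) = 0 := max_eq_left (by linarith)
    rw [this]
    exact min_le_right _ _
  have h2 : (limMeas F) S ≤ ENNReal.ofReal (Lfun F (layer f N i)) := by
    refine limMeas_open_le F hSopen ?_ (Lfun_nonneg F (layer_nonneg f N i))
    intro K hK hKS
    refine LK_le F K ⟨layer_nonneg f N i, ?_⟩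
    intro x hx
    have hx' : ((i:ℝ) + 1) < (N:ℝ) * f x := hKS hx
    rw [layer_apply]
    have h3 : (1:ℝ) ≤ max 0 ((N:ℝ) * f x - (i:ℝ)) := le_max_of_le_right (by linarith)
    exact le_min le_rfl h3
  exact h1.trans (ENNReal.toReal_le_of_le_ofReal (Lfun_nonneg F (layer_nonneg f N i)) h2)

lemma Ig_le_Lfun_of_unit [IsProbabilityMeasure (limMeas F)] (f : Ω →ᵇ ℝ)
    (h0 : ∀ x, 0 ≤ f x) (h1 : ∀ x, f x ≤ 1) : Ig f (Qlim F) ≤ Lfun F f := by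
  have key : ∀ n : ℕ, Ig f (Qlim F) ≤ Lfun F f + 1 / ((n:ℝ) + 1) := by
    intro n
    set N := n + 1 with hN
    have hNpos : (0:ℝ) < (N:ℝ) := by positivity
    have hfsum : ((N:ℝ) • f) = ∑ i ∈ Finset.range N, layer f N i := by
      ext x
      rw [BoundedContinuousFunction.coe_sum, Finset.sum_apply]
      simp only [BoundedContinuousFunction.coe_smul, Pi.smul_apply, smul_eq_mul]
      exact (layer_sum f h0 N h1 x).symm
    have hIg : (N:ℝ) * Ig f (Qlim F) = ∑ i ∈ Finset.range N, Ig (layer f N i) (Qlim F) := by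
      rw [← Ig_smul (N:ℝ) f, hfsum, Ig_sum]
    have hL : (N:ℝ) * Lfun F f = ∑ i ∈ Finset.range N, Lfun F (layer f N i) := by
      rw [← Lfun_smul F (N:ℝ) f, hfsum, Lfun_sum]
    have hbound : ∑ i ∈ Finset.range N, Ig (layer f N i) (Qlim F) ≤
        1 + ∑ i ∈ Finset.range N, Lfun F (layer f N i) := by
      rw [Finset.sum_range_succ']
      have hA : ∑ i ∈ Finset.range n, Ig (layer f N (i + 1)) (Qlim F) ≤
          ∑ i ∈ Finset.range n, Lfun F (layer f N i) :=
        Finset.sum_le_sum fun i _ => Ig_layer_succ_le F f N i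
      have hB : Ig (layer f N 0) (Qlim F) ≤ 1 := by
        calc Ig (layer f N 0) (Qlim F) ≤ Ig 1 (Qlim F) :=
              Ig_mono (fun x => by simpa using layer_le_one f N 0 x) (Qlim F)
          _ = 1 := Ig_one _
      have hC : ∑ i ∈ Finset.range n, Lfun F (layer f N i) ≤
          ∑ i ∈ Finset.range N, Lfun F (layer f N i) := by
        rw [hN, Finset.sum_range_succ]
        have := Lfun_nonneg F (layer_nonneg f N n)
        linarith
      linarith
    have : (N:ℝ) * Ig f (Qlim F) ≤ 1 + (N:ℝ) * Lfun F f := by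
      rw [hIg, hL]; exact hbound
    have hframe : Ig f (Qlim F) ≤ (1 + (N:ℝ) * Lfun F f) / (N:ℝ) := by
      rw [le_div_iff₀ hNpos]
      linarith [this]
    calc Ig f (Qlim F) ≤ (1 + (N:ℝ) * Lfun F f) / (N:ℝ) := hframe
      _ = Lfun F f + 1 / ((n:ℝ) + 1) := by
          field_simp [hN]
          rw [hN]
          push_cast
          ring
  have htend : Tendsto (fun n : ℕ => Lfun F f + 1 / ((n:ℝ) + 1)) atTop (𝓝 (Lfun F f)) := by
    simpa using tendsto_one_div_add_atTop_nhds_zero_nat.const_add (Lfun F f)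
  exact ge_of_tendsto htend (Eventually.of_forall key)

lemma Ig_eq_Lfun [IsProbabilityMeasure (limMeas F)] (f : Ω →ᵇ ℝ) :
    Ig f (Qlim F) = Lfun F f := by
  -- first the case `0 ≤ f ≤ 1`
  have unit : ∀ g : Ω →ᵇ ℝ, (∀ x, 0 ≤ g x) → (∀ x, g x ≤ 1) → Ig g (Qlim F) = Lfun F g := by
    intro g h0 h1
    refine le_antisymm (Ig_le_Lfun_of_unit F g h0 h1) ?_
    have h0' : ∀ x, 0 ≤ (1 - g) x := by
      intro x
      simp only [BoundedContinuousFunction.coe_sub, BoundedContinuousFunction.coe_one,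
        Pi.sub_apply, Pi.one_apply]
      linarith [h1 x]
    have h1' : ∀ x, (1 - g) x ≤ 1 := by
      intro x
      simp only [BoundedContinuousFunction.coe_sub, BoundedContinuousFunction.coe_one,
        Pi.sub_apply, Pi.one_apply]
      linarith [h0 x]
    have h2 := Ig_le_Lfun_of_unit F (1 - g) h0' h1'
    have e1 : Ig (1 - g) (Qlim F) = 1 - Ig g (Qlim F) := by
      have := Ig_add (1 - g) g (Qlim F)
      rw [sub_add_cancel, Ig_one] at this
      linarith
    have e2 : Lfun F (1 - g) = 1 - Lfun F g := by
      have := Lfun_add F (1 - g) g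
      rw [sub_add_cancel, Lfun_one] at this
      linarith
    rw [e1, e2] at h2
    linarith
  -- general case by affine rescaling
  set c : ℝ := ‖f‖ with hc
  have hc0 : (0:ℝ) ≤ c := norm_nonneg f
  set a : ℝ := (2 * c + 1)⁻¹ with ha
  have ha0 : (0:ℝ) < 2 * c + 1 := by linarith
  set g : Ω →ᵇ ℝ := a • (f + c • (1 : Ω →ᵇ ℝ)) with hg
  have hfb : ∀ x, |f x| ≤ c := fun x => f.norm_coe_le_norm x
  have hg0 : ∀ x, 0 ≤ g x := by
    intro x
    have := abs_le.1 (hfb x)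
    simp only [hg, BoundedContinuousFunction.coe_smul, Pi.smul_apply,
      BoundedContinuousFunction.coe_add, Pi.add_apply, BoundedContinuousFunction.coe_one,
      Pi.one_apply, smul_eq_mul]
    have : (0:ℝ) ≤ f x + c * 1 := by linarith [this.1]
    positivity
  have hg1 : ∀ x, g x ≤ 1 := by
    intro x
    have hx := abs_le.1 (hfb x)
    simp only [hg, BoundedContinuousFunction.coe_smul, Pi.smul_apply,
      BoundedContinuousFunction.coe_add, Pi.add_apply, BoundedContinuousFunction.coe_one,
      Pi.one_apply, smul_eq_mul]
    rw [ha, inv_mul_le_iff₀ ha0]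
    linarith [hx.2]
  have hkey := unit g hg0 hg1
  have eI : Ig g (Qlim F) = a * (Ig f (Qlim F) + c) := by
    rw [hg, Ig_smul, Ig_add, Ig_smul, Ig_one, mul_one]
  have eL : Lfun F g = a * (Lfun F f + c) := by
    rw [hg, Lfun_smul, Lfun_add, Lfun_smul, Lfun_one, mul_one]
  rw [eI, eL] at hkey
  have ha' : a ≠ 0 := by positivity
  have := mul_left_cancel₀ ha' hkey
  linarith

/-- Total mass of the limit measure is 1, given tightness of the functional. -/
lemma limMeas_univ_eq_one
    (htight : ∀ ε : ℝ, 0 < ε → ∃ K : Set Ω, IsCompact K ∧ ∀ f ∈ cand K, 1 - ε ≤ Lfun F f) :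
    limMeas F univ = 1 := by
  refine le_antisymm (limMeas_univ_le_one F) ?_
  have hfin : limMeas F univ ≠ ⊤ :=
    ne_top_of_le_ne_top ENNReal.one_ne_top (limMeas_univ_le_one F)
  have hto : (1:ℝ) ≤ (limMeas F univ).toReal := by
    refine le_of_forall_pos_le_add fun ε hε => ?_
    obtain ⟨K, hK, hLK⟩ := htight ε hε
    have h1 : 1 - ε ≤ LK F K := le_csInf ⟨_, ⟨1, one_mem_cand K, rfl⟩⟩ (by
      rintro x ⟨f, hf, rfl⟩
      exact hLK f hf)
    have h2 : ENNReal.ofReal (LK F K) ≤ limMeas F univ :=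
      le_limMeas_open F isOpen_univ hK (subset_univ K)
    have h3 : LK F K ≤ (limMeas F univ).toReal := by
      have := ENNReal.toReal_mono hfin h2
      rwa [ENNReal.toReal_ofReal (LK_nonneg F K)] at this
    linarith
  calc (1:ℝ≥0∞) = ENNReal.ofReal 1 := by simp
    _ ≤ ENNReal.ofReal ((limMeas F univ).toReal) := ENNReal.ofReal_le_ofReal hto
    _ = limMeas F univ := ENNReal.ofReal_toReal hfin

end Ultra

lemma compact_closure_of_tight (𝔓 : Set (ProbabilityMeasure Ω))
    (htight : ∀ ε : ℝ, 0 < ε → ∃ K : Set Ω, IsCompact K ∧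
      ∀ Q ∈ closure 𝔓, (Q : Measure Ω) Kᶜ ≤ ENNReal.ofReal ε) :
    IsCompact (closure 𝔓) := by
  rw [isCompact_iff_ultrafilter_le_nhds]
  intro F hF
  have hmem : closure 𝔓 ∈ F := le_principal_iff.1 hF
  have htight' : ∀ ε : ℝ, 0 < ε → ∃ K : Set Ω, IsCompact K ∧
      ∀ f ∈ cand (Ω := Ω) K, 1 - ε ≤ Lfun F f := by
    intro ε hε
    obtain ⟨K, hK, hQ⟩ := htight ε hε
    refine ⟨K, hK, ?_⟩
    rintro f ⟨hf0, hf1⟩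
    refine ge_of_tendsto (Ltend F f) ?_
    filter_upwards [hmem] with Q hQ'
    have h1 : ((Q : Measure Ω) K).toReal ≤ Ig f Q :=
      meas_le_integral hK.measurableSet hf0 hf1
    have h2 : ((Q : Measure Ω) Kᶜ).toReal ≤ ε :=
      ENNReal.toReal_le_of_le_ofReal hε.le (hQ Q hQ')
    have h3 : ((Q : Measure Ω) K).toReal + ((Q : Measure Ω) Kᶜ).toReal = 1 := by
      have h4 : (Q : Measure Ω) K + (Q : Measure Ω) Kᶜ = 1 := by
        rw [measure_add_measure_compl hK.measurableSet]
        exact measure_univ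
      have h5 := congrArg ENNReal.toReal h4
      rwa [ENNReal.toReal_add (measure_ne_top _ _) (measure_ne_top _ _), ENNReal.toReal_one] at h5
    linarith
  have hone : limMeas F univ = 1 := limMeas_univ_eq_one F htight'
  haveI : IsProbabilityMeasure (limMeas F) := ⟨hone⟩
  have hle : (F : Filter (ProbabilityMeasure Ω)) ≤ 𝓝 (Qlim F) := by
    have : Tendsto (fun Q : ProbabilityMeasure Ω => Q) (F : Filter (ProbabilityMeasure Ω))
        (𝓝 (Qlim F)) := by
      rw [ProbabilityMeasure.tendsto_iff_forall_integral_tendsto]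
      intro f
      have h := Ltend F f
      rw [← Ig_eq_Lfun F f] at h
      exact h
    exact tendsto_id'.1 this
  refine ⟨Qlim F, ?_, hle⟩
  have hne : (𝓝 (Qlim F) ⊓ 𝓟 (closure 𝔓)).NeBot :=
    Filter.neBot_of_le (f := (F : Filter (ProbabilityMeasure Ω))) (le_inf hle hF)
  have hmem' : Qlim F ∈ closure (closure 𝔓) := mem_closure_iff_clusterPt.2 hne
  rwa [closure_closure] at hmem'

section Main

variable [CompleteSpace Ω] [TopologicalSpace.SeparableSpace Ω]

lemma net_of_regular (𝔓 : Set (ProbabilityMeasure Ω)) (h𝔓 : 𝔓.Nonempty)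
    (reg : ∀ X : ℕ → Ω →ᵇ ℝ,
        (∀ ω, Antitone fun n => X n ω) →
        (∀ ω, Tendsto (fun n => X n ω) atTop (𝓝 0)) →
        Tendsto (fun n => ⨆ P : 𝔓, ∫ ω, X n ω ∂((P : ProbabilityMeasure Ω) : Measure Ω))
          atTop (𝓝 0))
    {ε δ : ℝ} (hε : 0 < ε) (hδ : 0 < δ) :
    ∃ t : Finset Ω, ∀ Q ∈ closure 𝔓,
      (Q : Measure Ω) (⋃ x ∈ t, Metric.closedBall x δ)ᶜ ≤ ENNReal.ofReal ε := by
  classical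
  obtain ⟨P₀, hP₀⟩ := h𝔓
  haveI : Nonempty Ω := P₀.nonempty
  set u : ℕ → Ω := TopologicalSpace.denseSeq Ω with hu
  have hdense : DenseRange u := TopologicalSpace.denseRange_denseSeq Ω
  set δ' : ℝ := δ / 2 with hδ'
  have hδ'0 : 0 < δ' := by positivity
  set φ : ℝ → ℝ := fun t => min 1 (max 0 (t / δ' - 1)) with hφ
  have hφ0 : ∀ t, 0 ≤ φ t := fun t => le_min zero_le_one (le_max_left _ _)
  have hφ1 : ∀ t, φ t ≤ 1 := fun t => min_le_left _ _
  have hφcont : Continuous φ := continuous_const.min (continuous_const.max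
    ((continuous_id.div_const δ').sub continuous_const))
  have hφeq0 : ∀ t ≤ δ', φ t = 0 := by
    intro t ht
    have h1 : max 0 (t / δ' - 1) = 0 := max_eq_left (by
      rw [sub_nonpos, div_le_one hδ'0]; linarith)
    rw [hφ]
    simp only
    rw [h1]
    exact min_eq_right zero_le_one
  have hφeq1 : ∀ t, δ ≤ t → φ t = 1 := by
    intro t ht
    have h2 : (2:ℝ) ≤ t / δ' := (le_div_iff₀ hδ'0).2 (by rw [hδ']; linarith)
    rw [hφ]
    simp only
    exact min_eq_left (le_max_of_le_right (by linarith))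
  set X : ℕ → Ω →ᵇ ℝ := fun m => BoundedContinuousFunction.mkOfBound
    ⟨fun ω => ∏ i ∈ Finset.range m, φ (dist ω (u i)),
      continuous_finset_prod _ fun i _ =>
        hφcont.comp (continuous_id.dist continuous_const)⟩ 1
    (by
      intro x y
      have h1 : ∀ z : Ω, (0:ℝ) ≤ ∏ i ∈ Finset.range m, φ (dist z (u i)) :=
        fun z => Finset.prod_nonneg fun i _ => hφ0 _
      have h2 : ∀ z : Ω, ∏ i ∈ Finset.range m, φ (dist z (u i)) ≤ 1 :=
        fun z => Finset.prod_le_one (fun i _ => hφ0 _) (fun i _ => hφ1 _)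
      rw [Real.dist_eq, abs_sub_le_iff]
      constructor <;> simp only [ContinuousMap.coe_mk] <;> linarith [h1 x, h2 x, h1 y, h2 y])
    with hX
  have hXapp : ∀ m ω, X m ω = ∏ i ∈ Finset.range m, φ (dist ω (u i)) := fun m ω => rfl
  have hXnn : ∀ m ω, 0 ≤ X m ω := by
    intro m ω
    rw [hXapp]
    exact Finset.prod_nonneg fun i _ => hφ0 _
  have hXanti : ∀ ω, Antitone fun m => X m ω := by
    intro ω
    refine antitone_nat_of_succ_le fun m => ?_
    rw [hXapp, hXapp, Finset.prod_range_succ]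
    calc (∏ i ∈ Finset.range m, φ (dist ω (u i))) * φ (dist ω (u m)) ≤
        (∏ i ∈ Finset.range m, φ (dist ω (u i))) * 1 :=
          mul_le_mul_of_nonneg_left (hφ1 _) (Finset.prod_nonneg fun i _ => hφ0 _)
      _ = _ := mul_one _
  have hXtend : ∀ ω, Tendsto (fun m => X m ω) atTop (𝓝 0) := by
    intro ω
    obtain ⟨i, hi⟩ := hdense.exists_dist_lt ω hδ'0
    have hzero : ∀ m, i < m → X m ω = 0 := by
      intro m him
      rw [hXapp]
      refine Finset.prod_eq_zero (Finset.mem_range.2 him) ?_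
      exact hφeq0 _ hi.le
    refine Tendsto.congr' ?_ (tendsto_const_nhds (x := (0:ℝ)))
    filter_upwards [eventually_gt_atTop i] with m hm
    exact (hzero m hm).symm
  obtain ⟨m₀, hm₀⟩ := ((reg X hXanti hXtend).eventually_lt_const hε).exists
  set t : Finset Ω := (Finset.range m₀).image u with ht
  refine ⟨t, ?_⟩
  have hBdd : BddAbove (range fun P : 𝔓 => ∫ ω, X m₀ ω ∂((P : ProbabilityMeasure Ω) : Measure Ω)) := by
    refine ⟨‖X m₀‖, ?_⟩
    rintro x ⟨P, rfl⟩
    exact le_trans (le_abs_self _) (abs_Ig_le (X m₀) P)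
  have hsub : closure 𝔓 ⊆ {Q : ProbabilityMeasure Ω | Ig (X m₀) Q ≤ ε} := by
    refine closure_minimal ?_ (isClosed_le (Ig_continuous (X m₀)) continuous_const)
    intro P hP
    have := le_ciSup hBdd (⟨P, hP⟩ : 𝔓)
    exact le_trans this hm₀.le
  intro Q hQ
  have hA : IsClosed (⋃ x ∈ t, Metric.closedBall x δ) :=
    t.finite_toSet.isClosed_biUnion fun x _ => Metric.isClosed_closedBall
  have hone : ∀ x ∈ (⋃ x ∈ t, Metric.closedBall x δ)ᶜ, (1:ℝ) ≤ X m₀ x := by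
    intro x hx
    rw [hXapp]
    rw [Set.mem_compl_iff, Set.mem_iUnion₂] at hx
    push_neg at hx
    refine le_of_eq (Finset.prod_eq_one fun i hi => ?_).symm
    have hui : u i ∈ t := Finset.mem_image.2 ⟨i, hi, rfl⟩
    have := hx (u i) hui
    rw [Metric.mem_closedBall, not_le] at this
    exact hφeq1 _ this.le
  have hmeas := meas_le_integral (μ := (Q : Measure Ω)) hA.measurableSet.compl
    (hXnn m₀) hone
  have hIg : Ig (X m₀) Q ≤ ε := hsub hQ
  calc (Q : Measure Ω) (⋃ x ∈ t, Metric.closedBall x δ)ᶜ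
      = ENNReal.ofReal (((Q : Measure Ω) (⋃ x ∈ t, Metric.closedBall x δ)ᶜ).toReal) :=
        (ENNReal.ofReal_toReal (measure_ne_top _ _)).symm
    _ ≤ ENNReal.ofReal ε := ENNReal.ofReal_le_ofReal (le_trans hmeas hIg)

lemma tight_of_regular (𝔓 : Set (ProbabilityMeasure Ω)) (h𝔓 : 𝔓.Nonempty)
    (reg : ∀ X : ℕ → Ω →ᵇ ℝ,
        (∀ ω, Antitone fun n => X n ω) →
        (∀ ω, Tendsto (fun n => X n ω) atTop (𝓝 0)) →
        Tendsto (fun n => ⨆ P : 𝔓, ∫ ω, X n ω ∂((P : ProbabilityMeasure Ω) : Measure Ω))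
          atTop (𝓝 0))
    {ε : ℝ} (hε : 0 < ε) :
    ∃ K : Set Ω, IsCompact K ∧ ∀ Q ∈ closure 𝔓,
      (Q : Measure Ω) Kᶜ ≤ ENNReal.ofReal ε := by
  have hnet : ∀ k : ℕ, ∃ t : Finset Ω, ∀ Q ∈ closure 𝔓,
      (Q : Measure Ω) (⋃ x ∈ t, Metric.closedBall x ((1/2)^k))ᶜ ≤
        ENNReal.ofReal (ε / 2^(k+1)) := fun k =>
    net_of_regular 𝔓 h𝔓 reg (by positivity) (by positivity)
  choose t ht using hnet
  set A : ℕ → Set Ω := fun k => ⋃ x ∈ t k, Metric.closedBall x ((1/2)^k) with hA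
  have hAclosed : ∀ k, IsClosed (A k) := fun k =>
    (t k).finite_toSet.isClosed_biUnion fun x _ => Metric.isClosed_closedBall
  refine ⟨⋂ k, A k, ?_, ?_⟩
  · refine TotallyBounded.isCompact_of_isClosed ?_ (isClosed_iInter hAclosed)
    rw [Metric.totallyBounded_iff]
    intro d hd
    obtain ⟨k, hk⟩ := exists_pow_lt_of_lt_one hd (by norm_num : (1:ℝ)/2 < 1)
    refine ⟨↑(t k), (t k).finite_toSet, ?_⟩
    refine (Set.iInter_subset A k).trans ?_
    intro x hx
    rw [hA] at hx
    simp only [Set.mem_iUnion] at hx ⊢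
    obtain ⟨y, hy, hmem⟩ := hx
    exact ⟨y, hy, lt_of_le_of_lt (Metric.mem_closedBall.1 hmem) hk⟩
  · intro Q hQ
    rw [Set.compl_iInter]
    refine (measure_iUnion_le _).trans ?_
    set r : ℝ≥0∞ := ENNReal.ofReal (1/2) with hr
    have hr0 : r ≠ 0 := by
      rw [hr]
      simp [ENNReal.ofReal_eq_zero]
    have hrt : r ≠ ⊤ := ENNReal.ofReal_ne_top
    have hbound : ∀ k, (Q : Measure Ω) (A k)ᶜ ≤ ENNReal.ofReal ε * r^(k+1) := by
      intro k
      refine (ht k Q hQ).trans (le_of_eq ?_)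
      have e1 : ε / 2^(k+1) = ε * (1/2)^(k+1) := by
        rw [one_div, inv_pow]
        ring
      rw [e1, ENNReal.ofReal_mul hε.le, ENNReal.ofReal_pow (by norm_num : (0:ℝ) ≤ 1/2)]
    refine (ENNReal.tsum_le_tsum hbound).trans (le_of_eq ?_)
    have hsum : ∑' k : ℕ, r^(k+1) = 1 := by
      have h1r : (1:ℝ≥0∞) - r = r := by
        rw [hr, show (1:ℝ≥0∞) = ENNReal.ofReal 1 by simp,
          ← ENNReal.ofReal_sub 1 (by norm_num : (0:ℝ) ≤ 1/2)]
        norm_num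
      calc ∑' k : ℕ, r^(k+1) = ∑' k : ℕ, r^k * r := by
            simp_rw [pow_succ]
        _ = (∑' k : ℕ, r^k) * r := ENNReal.tsum_mul_right
        _ = (1 - r)⁻¹ * r := by rw [ENNReal.tsum_geometric]
        _ = r⁻¹ * r := by rw [h1r]
        _ = 1 := ENNReal.inv_mul_cancel hr0 hrt
    rw [ENNReal.tsum_mul_left, hsum, mul_one]

lemma regular_of_compact (𝔓 : Set (ProbabilityMeasure Ω)) (h𝔓 : 𝔓.Nonempty)
    (hcomp : IsCompact (closure 𝔓)) (X : ℕ → Ω →ᵇ ℝ)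
    (hanti : ∀ ω, Antitone fun n => X n ω)
    (hto : ∀ ω, Tendsto (fun n => X n ω) atTop (𝓝 0)) :
    Antitone (fun n => ⨆ P : 𝔓, ∫ ω, X n ω ∂((P : ProbabilityMeasure Ω) : Measure Ω)) ∧
      Tendsto (fun n => ⨆ P : 𝔓, ∫ ω, X n ω ∂((P : ProbabilityMeasure Ω) : Measure Ω))
        atTop (𝓝 0) := by
  haveI : Nonempty 𝔓 := h𝔓.to_subtype
  have hXnn : ∀ n ω, 0 ≤ X n ω := by
    intro n ω
    refine le_of_tendsto (hto ω) ?_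
    filter_upwards [eventually_ge_atTop n] with m hm
    exact hanti ω hm
  set E : ℕ → ℝ := fun n => ⨆ P : 𝔓, ∫ ω, X n ω ∂((P : ProbabilityMeasure Ω) : Measure Ω)
    with hE
  have hBdd : ∀ n, BddAbove (range fun P : 𝔓 =>
      ∫ ω, X n ω ∂((P : ProbabilityMeasure Ω) : Measure Ω)) := by
    intro n
    refine ⟨‖X n‖, ?_⟩
    rintro x ⟨P, rfl⟩
    exact le_trans (le_abs_self _) (abs_Ig_le (X n) P)
  have hEanti : Antitone E := by
    intro a b hab
    refine ciSup_le fun P => ?_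
    exact le_trans (Ig_mono (fun x => hanti x hab) (P : ProbabilityMeasure Ω)) (le_ciSup (hBdd a) P)
  have hEnn : ∀ n, 0 ≤ E n := by
    intro n
    obtain ⟨P₀, hP₀⟩ := h𝔓
    exact le_trans (Ig_nonneg (hXnn n) P₀) (le_ciSup (hBdd n) ⟨P₀, hP₀⟩)
  refine ⟨hEanti, ?_⟩
  have hBddBelow : BddBelow (range E) := ⟨0, by rintro x ⟨n, rfl⟩; exact hEnn n⟩
  have htendsInf : Tendsto E atTop (𝓝 (⨅ n, E n)) := tendsto_atTop_ciInf hEanti hBddBelow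
  have hInf0 : (⨅ n, E n) = 0 := by
    refine le_antisymm ?_ (le_ciInf hEnn)
    by_contra hcon
    push_neg at hcon
    set c : ℝ := ⨅ n, E n with hc
    have hc0 : 0 < c := hcon
    have hEc : ∀ n, c ≤ E n := fun n => ciInf_le hBddBelow n
    have hchoose : ∀ n : ℕ, ∃ P : 𝔓, c / 2 < ∫ ω, X n ω ∂((P : ProbabilityMeasure Ω) : Measure Ω) := by
      intro n
      exact exists_lt_of_lt_ciSup (lt_of_lt_of_le (by linarith) (hEc n))
    choose P hP using hchoose
    have hPmem : ∀ n, ((P n : ProbabilityMeasure Ω)) ∈ closure 𝔓 :=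
      fun n => subset_closure (P n).2
    obtain ⟨Q, hQmem, φ, hφmono, hφtend⟩ :=
      hcomp.tendsto_subseq (x := fun n => (P n : ProbabilityMeasure Ω)) hPmem
    have hlower : ∀ m, c / 2 ≤ Ig (X m) Q := by
      intro m
      have htendm : Tendsto (fun k => Ig (X m) ((P (φ k) : ProbabilityMeasure Ω))) atTop
          (𝓝 (Ig (X m) Q)) := ((Ig_continuous (X m)).tendsto Q).comp hφtend
      refine ge_of_tendsto htendm ?_
      filter_upwards [eventually_ge_atTop m] with k hk
      have h1 : X (φ k) ≤ X m := by
        intro x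
        exact hanti x (le_trans hk (hφmono.le_apply))
      have h2 : c / 2 < Ig (X (φ k)) (P (φ k)) := hP (φ k)
      exact le_trans h2.le (Ig_mono (fun x => hanti x (le_trans hk hφmono.le_apply)) _)
    have hdom : Tendsto (fun m => Ig (X m) Q) atTop (𝓝 0) := by
      have h0 : (0:ℝ) = ∫ x, (0:ℝ) ∂(Q : Measure Ω) := by simp
      rw [h0]
      refine tendsto_integral_of_dominated_convergence (fun x => X 0 x)
        (fun n => ((X n).continuous.measurable.aestronglyMeasurable)) ((X 0).integrable _)
        (fun n => ae_of_all _ fun x => ?_) (ae_of_all _ fun x => hto x)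
      rw [Real.norm_eq_abs, abs_of_nonneg (hXnn n x)]
      exact hanti x (Nat.zero_le n)
    have := ge_of_tendsto hdom (Eventually.of_forall hlower)
    linarith
  rwa [hInf0] at htendsInf

end Main

end UERIC

end UERIC

/-- **Regularity of the upper expectation is equivalent to relative compactness.**
On a complete separable metric space `Ω`, the upper expectation
`𝔼[X] = sup_{P ∈ 𝔓} ∫ X dP` of a nonempty family `𝔓` of Borel probability measures
is regular on `C_b(Ω)` (i.e. `𝔼[X n] ↓ 0` whenever `X n ↓ 0` pointwise) if and only
if `𝔓` is relatively compact for the topology of weak convergence. -/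
theorem upper_expectation_regular_iff_relatively_compact
    {Ω : Type*} [MetricSpace Ω] [CompleteSpace Ω] [TopologicalSpace.SeparableSpace Ω]
    [MeasurableSpace Ω] [BorelSpace Ω]
    (𝔓 : Set (ProbabilityMeasure Ω)) (h𝔓 : 𝔓.Nonempty) :
    (∀ X : ℕ → Ω →ᵇ ℝ,
        (∀ ω, Antitone fun n => X n ω) →
        (∀ ω, Tendsto (fun n => X n ω) atTop (𝓝 0)) →
        (Antitone (fun n => ⨆ P : 𝔓, ∫ ω, X n ω ∂((P : ProbabilityMeasure Ω) : Measure Ω)) ∧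
          Tendsto (fun n => ⨆ P : 𝔓, ∫ ω, X n ω ∂((P : ProbabilityMeasure Ω) : Measure Ω))
            atTop (𝓝 0))) ↔
      IsCompact (closure 𝔓) := by
  constructor
  · intro reg
    exact UERIC.compact_closure_of_tight 𝔓 fun ε hε =>
      UERIC.tight_of_regular 𝔓 h𝔓 (fun X h1 h2 => (reg X h1 h2).2) hε
  · intro hcomp X h1 h2
    exact UERIC.regular_of_compact 𝔓 h𝔓 hcomp X h1 h2
end

section
/- Let Ω be a complete separable metric space. Let Ê : (Ω → ℝ) → ℝ be a functional whose restriction to bounded Borel-measurable functions is a sublinear expectation: monotone (X ≥ Y pointwise implies Ê[X] ≥ Ê[Y]), Ê[c] = c for every constant c, subadditive (Ê[X+Y] ≤ Ê[X] + Ê[Y]), positively homogeneous (Ê[λX] = λÊ[X] for λ ≥ 0); and assume Ê is tight: for every ε > 0 there exists a compact set K ⊆ Ω with Ê[1_{K^c}] < ε. Let {E_α}_{α ∈ 𝒜} be a family of functionals E_α : C_b(Ω) → ℝ such that each E_α is monotone, E_α[c] = c for constants, and E_α[X] − E_α[Y] ≤ Ê[X − Y] for all X, Y ∈ C_b(Ω)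 and all α ∈ 𝒜. Then {E_α}_{α ∈ 𝒜} is weakly compact: for every sequence (α_n)_{n≥1} in 𝒜 there exists a strictly increasing sequence of indices (n_i)_{i≥1} such that for every φ ∈ C_b(Ω), the real sequence (E_{α_{n_i}}[φ])_{i≥1} is a Cauchy sequence. -/
open MeasureTheory Filter Topology BoundedContinuousFunction

/-- A bounded Borel-measurable real function. -/
def IsBoundedBorel {Ω : Type*} [MeasurableSpace Ω] (X : Ω → ℝ) : Prop :=
  Measurable X ∧ ∃ M : ℝ, ∀ ω, |X ω| ≤ M

/-- Truncation of a bounded continuous function at level `q`. -/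
noncomputable def bcfTrunc {Ω : Type*} [TopologicalSpace Ω] (q : ℝ) (φ : Ω →ᵇ ℝ) :
    Ω →ᵇ ℝ :=
  ⟨⟨fun ω => max (min (φ ω) q) (-q),
    (φ.continuous.min continuous_const).max continuous_const⟩,
   ⟨2 * |q|, fun x y => by
      have hmem : ∀ ω, max (min (φ ω) q) (-q) ∈ Set.Icc (-|q|) |q| := fun ω =>
        ⟨(neg_le_neg (le_abs_self q)).trans (le_max_right _ _),
         max_le ((min_le_right _ q).trans (le_abs_self q)) (neg_le_abs q)⟩
      have := Real.dist_le_of_mem_Icc (hmem x) (hmem y)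
      simpa using this.trans (by linarith [abs_nonneg q])⟩⟩

lemma bcfTrunc_apply {Ω : Type*} [TopologicalSpace Ω] (q : ℝ) (φ : Ω →ᵇ ℝ) (ω : Ω) :
    bcfTrunc q φ ω = max (min (φ ω) q) (-q) := rfl

lemma norm_bcfTrunc_le {Ω : Type*} [TopologicalSpace Ω] (q : ℝ) (φ : Ω →ᵇ ℝ) :
    ‖bcfTrunc q φ‖ ≤ |q| := by
  refine (norm_le (abs_nonneg q)).mpr fun ω => ?_
  rw [Real.norm_eq_abs, bcfTrunc_apply, abs_le]
  exact ⟨(neg_le_neg (le_abs_self q)).trans (le_max_right _ _),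
    max_le ((min_le_right _ q).trans (le_abs_self q)) (neg_le_abs q)⟩

lemma abs_bcfTrunc_sub {Ω : Type*} [TopologicalSpace Ω] (q : ℝ) (φ ψ : Ω →ᵇ ℝ) (ω : Ω) :
    |bcfTrunc q φ ω - bcfTrunc q ψ ω| ≤ |φ ω - ψ ω| := by
  rw [bcfTrunc_apply, bcfTrunc_apply]
  refine (abs_max_sub_max_le_abs _ _ _).trans ?_
  have := abs_min_sub_min_le_max (φ ω) q (ψ ω) q
  simpa using this

lemma bcfTrunc_eq_of_abs_le {Ω : Type*} [TopologicalSpace Ω] {q : ℝ} (φ : Ω →ᵇ ℝ) {ω : Ω}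
    (h : |φ ω| ≤ q) : bcfTrunc q φ ω = φ ω := by
  obtain ⟨h1, h2⟩ := abs_le.mp h
  rw [bcfTrunc_apply, min_eq_left h2, max_eq_left h1]

/-- **Tightness implies weak compactness of a family of nonlinear expectations.**
Let `Ê` be a tight sublinear expectation on the bounded Borel functions of a complete
separable metric space `Ω`, and let `{E α}` be a family of nonlinear expectations on
`C_b(Ω)` such that `E α X − E α Y ≤ Ê[X − Y]` for all `X, Y ∈ C_b(Ω)`.  Then every
sequence in the family admits a subsequence whose values at each `φ ∈ C_b(Ω)` form a
Cauchy sequence. -/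
theorem tight_family_weakly_compact
    {Ω : Type*} [MetricSpace Ω] [CompleteSpace Ω] [TopologicalSpace.SeparableSpace Ω]
    [MeasurableSpace Ω] [BorelSpace Ω]
    (Ehat : (Ω → ℝ) → ℝ)
    (hmono : ∀ X Y : Ω → ℝ, IsBoundedBorel X → IsBoundedBorel Y →
      (∀ ω, Y ω ≤ X ω) → Ehat Y ≤ Ehat X)
    (hconst : ∀ c : ℝ, Ehat (fun _ => c) = c)
    (hsub : ∀ X Y : Ω → ℝ, IsBoundedBorel X → IsBoundedBorel Y →
      Ehat (fun ω => X ω + Y ω) ≤ Ehat X + Ehat Y)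
    (hpos : ∀ X : Ω → ℝ, IsBoundedBorel X → ∀ l : ℝ, 0 ≤ l →
      Ehat (fun ω => l * X ω) = l * Ehat X)
    (htight : ∀ ε : ℝ, 0 < ε → ∃ K : Set Ω, IsCompact K ∧
      Ehat (Kᶜ.indicator fun _ => (1 : ℝ)) < ε)
    {𝒜 : Type*} (E : 𝒜 → (Ω →ᵇ ℝ) → ℝ)
    (hEmono : ∀ (α : 𝒜) (X Y : Ω →ᵇ ℝ), (∀ ω, Y ω ≤ X ω) → E α Y ≤ E α X)
    (hEconst : ∀ (α : 𝒜) (c : ℝ), E α (BoundedContinuousFunction.const Ω c) = c)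
    (hdom : ∀ (α : 𝒜) (X Y : Ω →ᵇ ℝ), E α X - E α Y ≤ Ehat (fun ω => X ω - Y ω)) :
    ∀ α : ℕ → 𝒜, ∃ n : ℕ → ℕ, StrictMono n ∧
      ∀ φ : Ω →ᵇ ℝ, CauchySeq (fun i => E (α (n i)) φ) := by
  intro α
  haveI : SecondCountableTopology Ω := UniformSpace.secondCountable_of_separable Ω
  -- boundedness of the family values
  have hEbound : ∀ (a : 𝒜) (φ : Ω →ᵇ ℝ), |E a φ| ≤ ‖φ‖ := by
    intro a φ
    have hub : ∀ ω, φ ω ≤ (BoundedContinuousFunction.const Ω ‖φ‖) ω := fun ω => by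
      simpa using (le_abs_self (φ ω)).trans
        (by simpa [Real.norm_eq_abs] using φ.norm_coe_le_norm ω)
    have hlb : ∀ ω, (BoundedContinuousFunction.const Ω (-‖φ‖)) ω ≤ φ ω := fun ω => by
      simp only [BoundedContinuousFunction.const_apply]
      have : |φ ω| ≤ ‖φ‖ := by simpa [Real.norm_eq_abs] using φ.norm_coe_le_norm ω
      linarith [(abs_le.mp this).1]
    have h1 := hEmono a _ _ hub
    have h2 := hEmono a _ _ hlb
    rw [hEconst a ‖φ‖] at h1
    rw [hEconst a (-‖φ‖)] at h2
    exact abs_le.mpr ⟨h2, h1⟩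
  -- key uniform estimate
  have hest : ∀ (a : 𝒜) (φ ψ : Ω →ᵇ ℝ) (K : Set Ω) (δ c : ℝ), IsCompact K → 0 ≤ δ → 0 ≤ c →
      (∀ ω ∈ K, |φ ω - ψ ω| ≤ δ) → (∀ ω, |φ ω - ψ ω| ≤ c) →
      |E a φ - E a ψ| ≤ δ + c * Ehat (Kᶜ.indicator fun _ => 1) := by
    have oneside : ∀ (a : 𝒜) (φ ψ : Ω →ᵇ ℝ) (K : Set Ω) (δ c : ℝ), IsCompact K → 0 ≤ δ →
        0 ≤ c → (∀ ω ∈ K, |φ ω - ψ ω| ≤ δ) → (∀ ω, |φ ω - ψ ω| ≤ c) →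
        E a φ - E a ψ ≤ δ + c * Ehat (Kᶜ.indicator fun _ => 1) := by
      intro a φ ψ K δ c hK hδ hc h1 h2
      set ind : Ω → ℝ := Kᶜ.indicator (fun _ => (1 : ℝ)) with hind
      have hind01 : ∀ ω, ind ω = 0 ∨ ind ω = 1 := fun ω => by
        by_cases hω : ω ∈ Kᶜ
        · exact Or.inr (Set.indicator_of_mem hω _)
        · exact Or.inl (Set.indicator_of_notMem hω _)
      have hBBind : IsBoundedBorel ind :=
        ⟨measurable_const.indicator hK.isClosed.measurableSet.compl, 1, fun ω => by
          rcases hind01 ω with h | h <;> rw [h] <;> norm_num⟩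
      have hBBdiff : IsBoundedBorel (fun ω => φ ω - ψ ω) :=
        ⟨(φ.continuous.sub ψ.continuous).measurable, c, h2⟩
      have hBBcind : IsBoundedBorel (fun ω => c * ind ω) :=
        ⟨measurable_const.mul hBBind.1, c, fun ω => by
          show |c * ind ω| ≤ c
          rcases hind01 ω with h | h
          · rw [h, mul_zero, abs_zero]; exact hc
          · rw [h, mul_one, abs_of_nonneg hc]⟩
      have hBBsum : IsBoundedBorel (fun ω => δ + c * ind ω) :=
        ⟨measurable_const.add hBBcind.1, δ + c, fun ω => by
          show |δ + c * ind ω| ≤ δ + c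
          rcases hind01 ω with h | h
          · rw [h, mul_zero, add_zero, abs_of_nonneg hδ]; linarith
          · rw [h, mul_one, abs_of_nonneg (add_nonneg hδ hc)]⟩
      have hpt : ∀ ω, φ ω - ψ ω ≤ δ + c * ind ω := by
        intro ω
        by_cases hω : ω ∈ K
        · have h0 : ind ω = 0 := Set.indicator_of_notMem (by simpa using hω) _
          rw [h0]
          have := (abs_le.mp (h1 ω hω)).2
          linarith
        · have h0 : ind ω = 1 := Set.indicator_of_mem (by simpa using hω) _
          rw [h0]
          have := (abs_le.mp (h2 ω)).2
          linarith
      calc E a φ - E a ψ ≤ Ehat (fun ω => φ ω - ψ ω) := hdom a φ ψ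
        _ ≤ Ehat (fun ω => δ + c * ind ω) := hmono _ _ hBBsum hBBdiff hpt
        _ ≤ Ehat (fun _ => δ) + Ehat (fun ω => c * ind ω) :=
            hsub (fun _ => δ) (fun ω => c * ind ω)
              ⟨measurable_const, |δ|, fun ω => le_rfl⟩ hBBcind
        _ = δ + c * Ehat ind := by rw [hconst δ, hpos ind hBBind c hc]
    intro a φ ψ K δ c hK hδ hc h1 h2
    refine abs_sub_le_iff.mpr ⟨oneside a φ ψ K δ c hK hδ hc h1 h2, ?_⟩
    exact oneside a ψ φ K δ c hK hδ hc
      (fun ω hω => by rw [abs_sub_comm]; exact h1 ω hω)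
      (fun ω => by rw [abs_sub_comm]; exact h2 ω)
  -- tight compacts
  choose K hKc hKe using fun m : ℕ => htight (1 / (m + 1)) (by positivity)
  have hBBind : ∀ m : ℕ, IsBoundedBorel ((K m)ᶜ.indicator fun _ => (1 : ℝ)) := fun m =>
    ⟨measurable_const.indicator (hKc m).isClosed.measurableSet.compl, 1, fun ω => by
      by_cases hω : ω ∈ (K m)ᶜ
      · rw [Set.indicator_of_mem hω]; norm_num
      · rw [Set.indicator_of_notMem hω]; norm_num⟩
  have hind0 : ∀ m : ℕ, 0 ≤ Ehat ((K m)ᶜ.indicator fun _ => (1 : ℝ)) := by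
    intro m
    have := hmono _ (fun _ => (0 : ℝ)) (hBBind m)
      ⟨measurable_const, 0, fun ω => by norm_num⟩
      (fun ω => Set.indicator_apply_nonneg fun _ => zero_le_one)
    rw [hconst 0] at this
    exact this
  -- countable approximating families on each compact
  have happrox : ∀ m : ℕ, ∃ f : ℕ → Ω →ᵇ ℝ, ∀ (φ : Ω →ᵇ ℝ) (ε : ℝ), 0 < ε →
      ∃ j : ℕ, ∀ ω ∈ K m, |φ ω - f j ω| < ε := by
    intro m
    haveI : CompactSpace ↥(K m) := isCompact_iff_compactSpace.mp (hKc m)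
    let r : (Ω →ᵇ ℝ) → C(↥(K m), ℝ) := fun φ => ContinuousMap.restrict (K m) φ.toContinuousMap
    haveI : SecondCountableTopology C(↥(K m), ℝ) :=
      UniformSpace.secondCountable_of_separable _
    set S : Set C(↥(K m), ℝ) := Set.range r with hS
    haveI : Nonempty ↥S := ⟨⟨r 0, Set.mem_range_self 0⟩⟩
    obtain ⟨c, hc_count, hc_dense⟩ := TopologicalSpace.exists_countable_dense ↥S
    have hc_ne : c.Nonempty := hc_dense.nonempty
    obtain ⟨f0, hf0⟩ := hc_count.exists_eq_range hc_ne
    have hmem : ∀ j : ℕ, (f0 j : C(↥(K m), ℝ)) ∈ S := fun j => (f0 j).2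
    choose f hf using fun j => hmem j
    refine ⟨f, fun φ ε hε => ?_⟩
    have hx : r φ ∈ S := Set.mem_range_self φ
    have : (⟨r φ, hx⟩ : ↥S) ∈ closure c := hc_dense _
    rw [Metric.mem_closure_iff] at this
    obtain ⟨b, hbc, hb⟩ := this ε hε
    rw [hf0] at hbc
    obtain ⟨j, rfl⟩ := hbc
    refine ⟨j, fun ω hω => ?_⟩
    have hd : dist (r φ) (f0 j : C(↥(K m), ℝ)) < ε := by
      rw [Subtype.dist_eq] at hb; exact hb
    have hle := ContinuousMap.dist_apply_le_dist (f := r φ) (g := (f0 j : C(↥(K m), ℝ)))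
      (⟨ω, hω⟩ : ↥(K m))
    rw [← hf j] at hle hd
    have heq : dist ((r φ) ⟨ω, hω⟩) ((r (f j)) ⟨ω, hω⟩) = |φ ω - f j ω| := by
      simp [r, Real.dist_eq, ContinuousMap.restrict_apply]
    rw [← heq]
    exact hle.trans_lt hd
  choose f hf using happrox
  -- global countable family
  let e : (ℕ × ℕ × ℕ) ≃ ℕ := Denumerable.eqv (ℕ × ℕ × ℕ)
  let g : ℕ → Ω →ᵇ ℝ := fun k =>
    bcfTrunc ((e.symm k).2.2 : ℝ) (f (e.symm k).1 (e.symm k).2.1)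
  have hg : ∀ m j q : ℕ, g (e (m, j, q)) = bcfTrunc (q : ℝ) (f m j) := by
    intro m j q
    simp only [g, Equiv.symm_apply_apply]
  -- diagonal extraction
  let F : ℕ → ∀ k : ℕ, Set.Icc (-‖g k‖) ‖g k‖ := fun i k =>
    ⟨E (α i) (g k), Set.mem_Icc.mpr (abs_le.mp (hEbound (α i) (g k)))⟩
  haveI : SeqCompactSpace (∀ k : ℕ, Set.Icc (-‖g k‖) ‖g k‖) :=
    compactSpace_iff_seqCompactSpace.mp inferInstance
  obtain ⟨a, n, hn, hconv⟩ := SeqCompactSpace.tendsto_subseq F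
  have hcauchy : ∀ k : ℕ, CauchySeq (fun i => E (α (n i)) (g k)) := by
    intro k
    have h1 : Filter.Tendsto (fun i => ((F (n i) k : ℝ))) atTop (𝓝 (a k : ℝ)) := by
      have hk : Filter.Tendsto (fun i => F (n i) k) atTop (𝓝 (a k)) :=
        ((continuous_apply k).tendsto a).comp hconv
      exact (continuous_subtype_val.tendsto (a k)).comp hk
    exact h1.cauchySeq
  refine ⟨n, hn, fun φ => ?_⟩
  rw [Metric.cauchySeq_iff]
  intro ε hε
  -- choose parameters
  set q : ℕ := ⌈‖φ‖⌉₊ with hqdef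
  have hq : ‖φ‖ ≤ (q : ℝ) := Nat.le_ceil _
  set c : ℝ := ‖φ‖ + q with hcdef
  have hc0 : 0 ≤ c := add_nonneg (norm_nonneg φ) (Nat.cast_nonneg q)
  obtain ⟨m, hm⟩ := exists_nat_gt (8 * c / ε)
  have hm1 : c * (1 / (m + 1)) < ε / 8 ∨ c = 0 := by
    rcases eq_or_lt_of_le hc0 with h | h
    · exact Or.inr h.symm
    · left
      rw [mul_one_div, div_lt_div_iff₀ (by positivity) (by norm_num)]
      have : 8 * c / ε < (m : ℝ) + 1 := hm.trans (by linarith)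
      rw [div_lt_iff₀ hε] at this
      linarith
  have htail : c * Ehat ((K m)ᶜ.indicator fun _ => (1 : ℝ)) < ε / 8 := by
    rcases hm1 with h | h
    · calc c * Ehat ((K m)ᶜ.indicator fun _ => (1 : ℝ)) ≤ c * (1 / (m + 1)) := by
            apply mul_le_mul_of_nonneg_left (le_of_lt ?_) hc0
            exact_mod_cast hKe m
        _ < ε / 8 := h
    · rw [h, zero_mul]; positivity
  obtain ⟨j, hj⟩ := hf m φ (ε / 8) (by positivity)
  set ψ : Ω →ᵇ ℝ := g (e (m, j, q)) with hψdef
  have hψeq : ψ = bcfTrunc (q : ℝ) (f m j) := hg m j q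
  -- uniform closeness of E a φ and E a ψ
  have hclose : ∀ a : 𝒜, |E a φ - E a ψ| < ε / 4 := by
    intro a
    have h1 : ∀ ω ∈ K m, |φ ω - ψ ω| ≤ ε / 8 := by
      intro ω hω
      have hφω : |φ ω| ≤ (q : ℝ) :=
        le_trans (by simpa [Real.norm_eq_abs] using φ.norm_coe_le_norm ω) hq
      have : |φ ω - ψ ω| = |bcfTrunc (q : ℝ) φ ω - bcfTrunc (q : ℝ) (f m j) ω| := by
        rw [hψeq, bcfTrunc_eq_of_abs_le φ hφω]
      rw [this]
      exact (abs_bcfTrunc_sub _ _ _ _).trans (le_of_lt (hj ω hω))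
    have h2 : ∀ ω, |φ ω - ψ ω| ≤ c := by
      intro ω
      have hφω : |φ ω| ≤ ‖φ‖ := by simpa [Real.norm_eq_abs] using φ.norm_coe_le_norm ω
      have hψω : |ψ ω| ≤ (q : ℝ) := by
        rw [hψeq]
        refine le_trans ?_ (le_of_eq (abs_of_nonneg (Nat.cast_nonneg q)))
        calc |bcfTrunc (q : ℝ) (f m j) ω| ≤ ‖bcfTrunc (q : ℝ) (f m j)‖ := by
              simpa [Real.norm_eq_abs] using (bcfTrunc (q : ℝ) (f m j)).norm_coe_le_norm ω
          _ ≤ |(q : ℝ)| := norm_bcfTrunc_le _ _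
      calc |φ ω - ψ ω| ≤ |φ ω| + |ψ ω| := abs_sub _ _
        _ ≤ c := by rw [hcdef]; exact add_le_add hφω hψω
    have := hest a φ ψ (K m) (ε / 8) c (hKc m) (by positivity) hc0 h1 h2
    calc |E a φ - E a ψ| ≤ ε / 8 + c * Ehat ((K m)ᶜ.indicator fun _ => (1 : ℝ)) := this
      _ < ε / 8 + ε / 8 := by linarith [htail]
      _ = ε / 4 := by ring
  -- conclude
  obtain ⟨N, hN⟩ := Metric.cauchySeq_iff.mp (hcauchy (e (m, j, q))) (ε / 4) (by positivity)
  refine ⟨N, fun i hi i' hi' => ?_⟩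
  have hmid : dist (E (α (n i)) ψ) (E (α (n i')) ψ) < ε / 4 := hN i hi i' hi'
  have d1 := hclose (α (n i))
  have d2 := hclose (α (n i'))
  rw [Real.dist_eq] at hmid ⊢
  calc |E (α (n i)) φ - E (α (n i')) φ|
      ≤ |E (α (n i)) φ - E (α (n i)) ψ| + |E (α (n i)) ψ - E (α (n i')) φ| := abs_sub_le _ _ _
    _ ≤ |E (α (n i)) φ - E (α (n i)) ψ| + (|E (α (n i)) ψ - E (α (n i')) ψ|
        + |E (α (n i')) ψ - E (α (n i')) φ|) := by
          gcongr
          exact abs_sub_le _ _ _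
    _ < ε / 4 + (ε / 4 + ε / 4) := by
          have d2' : |E (α (n i')) ψ - E (α (n i')) φ| < ε / 4 := by
            rw [abs_sub_comm]; exact d2
          gcongr
    _ < ε := by linarith
end

section
/- Fix d ≥ 1, l > 0, and a constant C > 0. Let 𝔽̄ be a functional defined on the space L_l(ℝ^d) of Borel-measurable functions ψ : ℝ^d → ℝ satisfying |ψ(x)| ≤ C_ψ(1 + |x|^l) for some constant C_ψ, such that 𝔽̄ is monotone, 𝔽̄[c] = c for constants, subadditive, positively homogeneous, and 𝔽̄[x ↦ |x|^l] < ∞. Let {F_α}_{α ∈ 𝒜} be a family of functionals F_α : C_b(ℝ^d) → ℝ such that each F_α is monotone with F_α[c] = c for constants, and F_α[φ] − F_α[ψ] ≤ 𝔽̄[φ − ψ] for all φ, ψ ∈ C_b(ℝ^d) and all α ∈ 𝒜. Then {F_α}_{α ∈ 𝒜} is weakly compact: every sequence (F_{α_n})_{n≥1} admits a subsequence (F_{α_{n_i}})_{i≥1} such that for each φ ∈ C_b(ℝ^d), the real sequence (F_{α_{n_i}}[φ])_{i≥1} is Cauchy. -/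
open MeasureTheory Filter Topology BoundedContinuousFunction

/-- A Borel function on `ℝ^d` of growth at most of order `l`:
`|ψ x| ≤ C_ψ (1 + |x|^l)` for some constant `C_ψ`. -/
def GrowthAtMost {d : ℕ} (l : ℝ) (ψ : EuclideanSpace ℝ (Fin d) → ℝ) : Prop :=
  Measurable ψ ∧ ∃ Cψ : ℝ, ∀ x, |ψ x| ≤ Cψ * (1 + ‖x‖ ^ l)

section Helpers

variable {d : ℕ}

/-- A continuous cutoff: `1` on the ball of radius `N`, `0` outside radius `N+1`. -/
noncomputable def myCutoff (N : ℕ) : EuclideanSpace ℝ (Fin d) →ᵇ ℝ :=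
  BoundedContinuousFunction.mkOfBound
    ⟨fun x => max 0 (min 1 ((N : ℝ) + 1 - ‖x‖)), by fun_prop⟩ 1
    (fun x y => by
      have h1 : ∀ z : EuclideanSpace ℝ (Fin d),
          max 0 (min 1 ((N : ℝ) + 1 - ‖z‖)) ∈ Set.Icc (0:ℝ) 1 :=
        fun z => ⟨le_max_left _ _, max_le zero_le_one (min_le_left _ _)⟩
      simpa using Real.dist_le_of_mem_Icc (h1 x) (h1 y))

lemma myCutoff_mem (N : ℕ) (x : EuclideanSpace ℝ (Fin d)) :
    myCutoff (d := d) N x ∈ Set.Icc (0:ℝ) 1 :=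
  ⟨le_max_left _ _, max_le zero_le_one (min_le_left _ _)⟩

lemma myCutoff_eq_one {N : ℕ} {x : EuclideanSpace ℝ (Fin d)} (h : ‖x‖ ≤ N) :
    myCutoff (d := d) N x = 1 := by
  have h1 : (1:ℝ) ≤ (N:ℝ) + 1 - ‖x‖ := by linarith
  show max 0 (min 1 ((N : ℝ) + 1 - ‖x‖)) = 1
  rw [min_eq_left h1, max_eq_right zero_le_one]

lemma myCutoff_eq_zero {N : ℕ} {x : EuclideanSpace ℝ (Fin d)} (h : (N:ℝ) + 1 ≤ ‖x‖) :
    myCutoff (d := d) N x = 0 := by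
  have h1 : (N:ℝ) + 1 - ‖x‖ ≤ 0 := by linarith
  show max 0 (min 1 ((N : ℝ) + 1 - ‖x‖)) = 0
  rw [max_eq_left (le_trans (min_le_right _ _) h1)]

/-- Projection of `ℝ^d` onto the closed ball of radius `R`. -/
noncomputable def ballProj (R : ℝ) (x : EuclideanSpace ℝ (Fin d)) : EuclideanSpace ℝ (Fin d) :=
  (R / max R ‖x‖) • x

lemma ballProj_continuous (R : ℝ) (hR : 0 < R) :
    Continuous (ballProj (d := d) R) := by
  refine Continuous.smul (f := fun x : EuclideanSpace ℝ (Fin d) => R / max R ‖x‖) ?_ continuous_id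
  exact continuous_const.div (continuous_const.max continuous_norm)
    (fun x => ne_of_gt (lt_of_lt_of_le hR (le_max_left _ _)))

lemma ballProj_norm_le (R : ℝ) (hR : 0 < R) (x : EuclideanSpace ℝ (Fin d)) :
    ‖ballProj R x‖ ≤ R := by
  have hm : 0 < max R ‖x‖ := lt_of_lt_of_le hR (le_max_left _ _)
  have : ‖ballProj R x‖ = (R / max R ‖x‖) * ‖x‖ := by
    rw [ballProj, norm_smul, Real.norm_eq_abs, abs_of_nonneg (by positivity)]
  rw [this, div_mul_eq_mul_div, div_le_iff₀ hm]
  have := le_max_right R ‖x‖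
  nlinarith [norm_nonneg x]

lemma ballProj_mem (R : ℝ) (hR : 0 < R) (x : EuclideanSpace ℝ (Fin d)) :
    ballProj R x ∈ Metric.closedBall (0 : EuclideanSpace ℝ (Fin d)) R := by
  simpa [Metric.mem_closedBall, dist_zero_right] using ballProj_norm_le R hR x

noncomputable def ballProjMap (R : ℝ) (hR : 0 < R) :
    C(EuclideanSpace ℝ (Fin d), Metric.closedBall (0 : EuclideanSpace ℝ (Fin d)) R) :=
  ⟨fun x => ⟨ballProj R x, ballProj_mem R hR x⟩,
   (ballProj_continuous R hR).subtype_mk _⟩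

noncomputable def extendBall (R : ℝ) (hR : 0 < R)
    (g : C(Metric.closedBall (0 : EuclideanSpace ℝ (Fin d)) R, ℝ)) :
    EuclideanSpace ℝ (Fin d) →ᵇ ℝ :=
  haveI : CompactSpace (Metric.closedBall (0 : EuclideanSpace ℝ (Fin d)) R) :=
    isCompact_iff_compactSpace.mp (isCompact_closedBall _ _)
  (BoundedContinuousFunction.mkOfCompact g).compContinuous (ballProjMap R hR)

lemma extendBall_apply (R : ℝ) (hR : 0 < R)
    (g : C(Metric.closedBall (0 : EuclideanSpace ℝ (Fin d)) R, ℝ))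
    (x : EuclideanSpace ℝ (Fin d)) :
    extendBall R hR g x = g ((ballProjMap R hR) x) := rfl

lemma extendBall_lipschitz (R : ℝ) (hR : 0 < R) :
    Continuous (extendBall (d := d) R hR) := by
  haveI : CompactSpace (Metric.closedBall (0 : EuclideanSpace ℝ (Fin d)) R) :=
    isCompact_iff_compactSpace.mp (isCompact_closedBall _ _)
  have : LipschitzWith 1 (extendBall (d := d) R hR) := by
    apply LipschitzWith.of_dist_le_mul
    intro g h
    rw [NNReal.coe_one, one_mul]
    refine (BoundedContinuousFunction.dist_le dist_nonneg).2 (fun x => ?_)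
    show dist (g ((ballProjMap R hR) x)) (h ((ballProjMap R hR) x)) ≤ dist g h
    exact ContinuousMap.dist_apply_le_dist _
  exact this.continuous

lemma separable_range_extendBall (R : ℝ) (hR : 0 < R) :
    TopologicalSpace.IsSeparable (Set.range (extendBall (d := d) R hR)) := by
  haveI : CompactSpace (Metric.closedBall (0 : EuclideanSpace ℝ (Fin d)) R) :=
    isCompact_iff_compactSpace.mp (isCompact_closedBall _ _)
  exact TopologicalSpace.isSeparable_range (extendBall_lipschitz R hR)

lemma extendBall_eq (R : ℝ) (hR : 0 < R) (f : EuclideanSpace ℝ (Fin d) →ᵇ ℝ)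
    (hf : ∀ x, R ≤ ‖x‖ → f x = 0) :
    extendBall R hR ((f : C(EuclideanSpace ℝ (Fin d), ℝ)).restrict
      (Metric.closedBall (0 : EuclideanSpace ℝ (Fin d)) R)) = f := by
  ext x
  rw [extendBall_apply]
  show f (ballProj R x) = f x
  rcases le_or_gt ‖x‖ R with h | h
  · have hpx : ballProj R x = x := by
      rw [ballProj, max_eq_left h, div_self (ne_of_gt hR), one_smul]
    rw [hpx]
  · have hx : 0 < ‖x‖ := lt_of_lt_of_le hR h.le
    have : ‖ballProj R x‖ = R := by
      rw [ballProj, max_eq_right h.le, norm_smul, Real.norm_eq_abs,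
        abs_of_nonneg (by positivity), div_mul_cancel₀ _ (ne_of_gt hx)]
    rw [hf _ this.ge, hf _ h.le]

end Helpers

/-- **Weak compactness of a family of nonlinear distributions dominated by a sublinear
expectation on the space `L_l(ℝ^d)` of functions with growth of order `l`.**
Every sequence from the family `{F α}` admits a subsequence whose values at each
`φ ∈ C_b(ℝ^d)` form a Cauchy sequence. -/
theorem dominated_family_of_distributions_weakly_compact
    {d : ℕ} (hd : 1 ≤ d) (l : ℝ) (hl : 0 < l) (C : ℝ) (hC : 0 < C)
    (Fbar : (EuclideanSpace ℝ (Fin d) → ℝ) → ℝ)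
    (hmono : ∀ φ ψ : EuclideanSpace ℝ (Fin d) → ℝ, GrowthAtMost l φ → GrowthAtMost l ψ →
      (∀ x, ψ x ≤ φ x) → Fbar ψ ≤ Fbar φ)
    (hconst : ∀ c : ℝ, Fbar (fun _ => c) = c)
    (hsub : ∀ φ ψ : EuclideanSpace ℝ (Fin d) → ℝ, GrowthAtMost l φ → GrowthAtMost l ψ →
      Fbar (fun x => φ x + ψ x) ≤ Fbar φ + Fbar ψ)
    (hpos : ∀ φ : EuclideanSpace ℝ (Fin d) → ℝ, GrowthAtMost l φ → ∀ lam : ℝ, 0 ≤ lam →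
      Fbar (fun x => lam * φ x) = lam * Fbar φ)
    (hfin : ∃ M : ℝ, Fbar (fun x => ‖x‖ ^ l) ≤ M)
    {𝒜 : Type*} (F : 𝒜 → (EuclideanSpace ℝ (Fin d) →ᵇ ℝ) → ℝ)
    (hFmono : ∀ (α : 𝒜) (φ ψ : EuclideanSpace ℝ (Fin d) →ᵇ ℝ),
      (∀ x, ψ x ≤ φ x) → F α ψ ≤ F α φ)
    (hFconst : ∀ (α : 𝒜) (c : ℝ),
      F α (BoundedContinuousFunction.const (EuclideanSpace ℝ (Fin d)) c) = c)
    (hdom : ∀ (α : 𝒜) (φ ψ : EuclideanSpace ℝ (Fin d) →ᵇ ℝ),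
      F α φ - F α ψ ≤ Fbar (fun x => φ x - ψ x)) :
    ∀ α : ℕ → 𝒜, ∃ n : ℕ → ℕ, StrictMono n ∧
      ∀ φ : EuclideanSpace ℝ (Fin d) →ᵇ ℝ, CauchySeq (fun i => F (α (n i)) φ) := by
  intro α
  obtain ⟨M, hM⟩ := hfin
  set M' : ℝ := max M 0 with hM'def
  have hM'0 : 0 ≤ M' := le_max_right _ _
  have hM' : Fbar (fun x => ‖x‖ ^ l) ≤ M' := hM.trans (le_max_left _ _)
  -- growth facts
  have hgrow : ∀ (f : EuclideanSpace ℝ (Fin d) → ℝ), Measurable f →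
      ∀ B : ℝ, (∀ x, |f x| ≤ B) → GrowthAtMost l f := by
    intro f hf B hB
    refine ⟨hf, B, fun x => (hB x).trans ?_⟩
    have h0 : 0 ≤ B := le_trans (abs_nonneg (f 0)) (hB 0)
    nlinarith [Real.rpow_nonneg (norm_nonneg x) l]
  have hgrow2 : ∀ φ ψ : EuclideanSpace ℝ (Fin d) →ᵇ ℝ,
      GrowthAtMost l (fun x => φ x - ψ x) := by
    intro φ ψ
    refine hgrow _ ((φ.continuous.sub ψ.continuous).measurable) (‖φ‖ + ‖ψ‖) (fun x => ?_)
    have h1 : |φ x| ≤ ‖φ‖ := by rw [← Real.norm_eq_abs]; exact φ.norm_coe_le_norm x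
    have h2 : |ψ x| ≤ ‖ψ‖ := by rw [← Real.norm_eq_abs]; exact ψ.norm_coe_le_norm x
    calc |φ x - ψ x| ≤ |φ x| + |ψ x| := abs_sub _ _
    _ ≤ ‖φ‖ + ‖ψ‖ := add_le_add h1 h2
  have hgrconst : ∀ c : ℝ, GrowthAtMost l (fun _ : EuclideanSpace ℝ (Fin d) => c) :=
    fun c => hgrow _ measurable_const |c| (fun _ => le_refl _)
  have hgrpow : GrowthAtMost l (fun x : EuclideanSpace ℝ (Fin d) => ‖x‖ ^ l) := by
    refine ⟨(continuous_norm.rpow_const fun x => Or.inr hl.le).measurable, 1, fun x => ?_⟩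
    rw [abs_of_nonneg (Real.rpow_nonneg (norm_nonneg x) l)]
    nlinarith [Real.rpow_nonneg (norm_nonneg x) l]
  have hgrcpow : ∀ c : ℝ, 0 ≤ c →
      GrowthAtMost l (fun x : EuclideanSpace ℝ (Fin d) => c * ‖x‖ ^ l) := by
    intro c hc
    refine ⟨measurable_const.mul hgrpow.1, c, fun x => ?_⟩
    rw [abs_of_nonneg (mul_nonneg hc (Real.rpow_nonneg (norm_nonneg x) l))]
    nlinarith [Real.rpow_nonneg (norm_nonneg x) l]
  -- each F α is 1-Lipschitz in the sup-norm
  have hlip : ∀ (a : 𝒜) (φ ψ : EuclideanSpace ℝ (Fin d) →ᵇ ℝ),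
      |F a φ - F a ψ| ≤ dist φ ψ := by
    have key : ∀ (a : 𝒜) (φ ψ : EuclideanSpace ℝ (Fin d) →ᵇ ℝ),
        F a φ - F a ψ ≤ dist φ ψ := by
      intro a φ ψ
      refine (hdom a φ ψ).trans ?_
      have h1 : Fbar (fun x => φ x - ψ x) ≤ Fbar (fun _ => dist φ ψ) := by
        refine hmono _ _ (hgrconst _) (hgrow2 φ ψ) (fun x => ?_)
        refine (le_abs_self _).trans ?_
        rw [← Real.dist_eq]
        exact BoundedContinuousFunction.dist_coe_le_dist x
      exact h1.trans (le_of_eq (hconst _))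
    intro a φ ψ
    refine abs_sub_le_iff.2 ⟨key a φ ψ, ?_⟩
    rw [dist_comm]; exact key a ψ φ
  -- values are bounded by the norm
  have hbd : ∀ (a : 𝒜) (ψ : EuclideanSpace ℝ (Fin d) →ᵇ ℝ), |F a ψ| ≤ ‖ψ‖ := by
    intro a ψ
    rw [abs_le]
    constructor
    · have h := hFmono a ψ (BoundedContinuousFunction.const (EuclideanSpace ℝ (Fin d)) (-‖ψ‖))
        (fun x => by
          simp only [BoundedContinuousFunction.const_apply]
          have := ψ.norm_coe_le_norm x
          rw [Real.norm_eq_abs] at this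
          linarith [abs_le.1 this |>.1])
      rwa [hFconst] at h
    · have h := hFmono a (BoundedContinuousFunction.const (EuclideanSpace ℝ (Fin d)) ‖ψ‖) ψ
        (fun x => by
          simp only [BoundedContinuousFunction.const_apply]
          have := ψ.norm_coe_le_norm x
          rw [Real.norm_eq_abs] at this
          linarith [abs_le.1 this |>.1, abs_le.1 this |>.2])
      rwa [hFconst] at h
  -- key truncation estimate
  have hkey : ∀ (a : 𝒜) (φ : EuclideanSpace ℝ (Fin d) →ᵇ ℝ) (N : ℕ), 1 ≤ N →
      |F a φ - F a (φ * myCutoff (d := d) N)| ≤ ‖φ‖ * M' / (N : ℝ) ^ l := by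
    intro a φ N hN
    have hNR : (1:ℝ) ≤ (N:ℝ) := by exact_mod_cast hN
    have hNl : (0:ℝ) < (N:ℝ) ^ l := Real.rpow_pos_of_pos (by linarith) l
    set c : ℝ := ‖φ‖ / (N:ℝ) ^ l with hc
    have hc0 : 0 ≤ c := div_nonneg (norm_nonneg φ) hNl.le
    have hpt : ∀ x, |φ x - (φ * myCutoff (d := d) N) x| ≤ c * ‖x‖ ^ l := by
      intro x
      have happ : (φ * myCutoff (d := d) N) x = φ x * myCutoff (d := d) N x := rfl
      rcases le_or_gt ‖x‖ (N:ℝ) with h | h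
      · rw [happ, myCutoff_eq_one h, mul_one, sub_self, abs_zero]
        exact mul_nonneg hc0 (Real.rpow_nonneg (norm_nonneg x) l)
      · have hm := myCutoff_mem N x
        have h1 : |φ x - φ x * myCutoff (d := d) N x| ≤ ‖φ‖ := by
          have heq : φ x - φ x * myCutoff (d := d) N x = φ x * (1 - myCutoff (d := d) N x) := by ring
          rw [heq, abs_mul]
          have ha : |φ x| ≤ ‖φ‖ := by rw [← Real.norm_eq_abs]; exact φ.norm_coe_le_norm x
          have hb : |1 - myCutoff (d := d) N x| ≤ 1 := by
            rw [abs_le]; constructor <;> linarith [hm.1, hm.2]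
          calc |φ x| * |1 - myCutoff (d := d) N x| ≤ ‖φ‖ * 1 :=
            mul_le_mul ha hb (abs_nonneg _) (norm_nonneg _)
          _ = ‖φ‖ := mul_one _
        have h2 : ‖φ‖ ≤ c * ‖x‖ ^ l := by
          have hxl : (N:ℝ) ^ l ≤ ‖x‖ ^ l :=
            Real.rpow_le_rpow (by linarith) h.le hl.le
          rw [hc, div_mul_eq_mul_div, le_div_iff₀ hNl]
          nlinarith [norm_nonneg φ]
        rw [happ]
        exact h1.trans h2
    have side : ∀ φ' ψ' : EuclideanSpace ℝ (Fin d) →ᵇ ℝ,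
        (∀ x, φ' x - ψ' x ≤ c * ‖x‖ ^ l) →
        F a φ' - F a ψ' ≤ ‖φ‖ * M' / (N:ℝ) ^ l := by
      intro φ' ψ' hpt'
      refine (hdom a φ' ψ').trans ?_
      refine le_trans (hmono _ _ (hgrcpow c hc0) (hgrow2 φ' ψ') hpt') ?_
      rw [hpos _ hgrpow c hc0]
      calc c * Fbar (fun x => ‖x‖ ^ l) ≤ c * M' := mul_le_mul_of_nonneg_left hM' hc0
      _ = ‖φ‖ * M' / (N:ℝ) ^ l := by rw [hc]; ring
    refine abs_sub_le_iff.2 ⟨side φ (φ * myCutoff (d := d) N)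
      (fun x => (le_abs_self _).trans (hpt x)), side (φ * myCutoff (d := d) N) φ (fun x => ?_)⟩
    have := hpt x
    rw [abs_sub_comm] at this
    exact (le_abs_self _).trans this
  -- the separable set of truncations
  set S : Set (EuclideanSpace ℝ (Fin d) →ᵇ ℝ) :=
    ⋃ (N : ℕ), Set.range (extendBall ((N:ℝ) + 1) (by positivity)) with hSdef
  have hSsep : TopologicalSpace.IsSeparable S :=
    TopologicalSpace.IsSeparable.iUnion (fun N => separable_range_extendBall _ _)
  obtain ⟨c0, hc0count, hc0sub⟩ := hSsep
  have hc1count : (insert (0 : EuclideanSpace ℝ (Fin d) →ᵇ ℝ) c0).Countable :=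
    hc0count.insert 0
  obtain ⟨e, he⟩ := hc1count.exists_eq_range ⟨0, Set.mem_insert _ _⟩
  have hSclos : S ⊆ closure (Set.range e) := by
    rw [← he]
    exact hc0sub.trans (closure_mono (Set.subset_insert _ _))
  have hmemS : ∀ (φ : EuclideanSpace ℝ (Fin d) →ᵇ ℝ) (N : ℕ),
      (φ * myCutoff (d := d) N) ∈ S := by
    intro φ N
    refine Set.mem_iUnion.2 ⟨N, ?_⟩
    refine ⟨((φ * myCutoff (d := d) N : EuclideanSpace ℝ (Fin d) →ᵇ ℝ) :
        C(EuclideanSpace ℝ (Fin d), ℝ)).restrict _, ?_⟩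
    refine extendBall_eq _ (by positivity) _ (fun x hx => ?_)
    show φ x * myCutoff (d := d) N x = 0
    rw [myCutoff_eq_zero hx, mul_zero]
  -- diagonal extraction via compactness of a product of intervals
  set y : ℕ → (ℕ → ℝ) := fun m k => F (α m) (e k) with hydef
  have hK : IsCompact (Set.pi Set.univ (fun k : ℕ => Set.Icc (-‖e k‖) ‖e k‖)) :=
    isCompact_univ_pi (fun k => isCompact_Icc)
  have hyK : ∀ m, y m ∈ Set.pi Set.univ (fun k : ℕ => Set.Icc (-‖e k‖) ‖e k‖) := by
    intro m k _
    exact abs_le.1 (hbd (α m) (e k))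
  obtain ⟨afun, -, n, hnmono, hconv⟩ := hK.tendsto_subseq hyK
  refine ⟨n, hnmono, ?_⟩
  have hCk : ∀ k : ℕ, CauchySeq (fun i => F (α (n i)) (e k)) := by
    intro k
    have : Filter.Tendsto (fun i => y (n i) k) atTop (nhds (afun k)) :=
      ((continuous_apply k).tendsto afun).comp hconv
    exact this.cauchySeq
  intro φ
  rw [Metric.cauchySeq_iff]
  intro ε hε
  -- choose the truncation level
  set P : ℝ := ‖φ‖ * M' with hPdef
  have hP : 0 ≤ P := mul_nonneg (norm_nonneg φ) hM'0
  have hten : Tendsto (fun N : ℕ => (N:ℝ) ^ l) atTop atTop :=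
    (tendsto_rpow_atTop hl).comp tendsto_natCast_atTop_atTop
  obtain ⟨Nt, hB, hNt1⟩ :=
    ((hten.eventually_gt_atTop (P / (ε/5))).and (eventually_ge_atTop 1)).exists
  have hε5 : (0:ℝ) < ε / 5 := by linarith
  have hNpos : (0:ℝ) < (Nt:ℝ) ^ l := lt_of_le_of_lt (div_nonneg hP hε5.le) hB
  have hsmall : P / (Nt:ℝ) ^ l < ε / 5 := by
    rw [div_lt_iff₀ hNpos]
    have := (div_lt_iff₀ hε5).1 hB
    nlinarith
  set ψ : EuclideanSpace ℝ (Fin d) →ᵇ ℝ := φ * myCutoff (d := d) Nt with hψdef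
  have htrunc : ∀ a : 𝒜, |F a φ - F a ψ| < ε / 5 :=
    fun a => lt_of_le_of_lt (hkey a φ Nt hNt1) hsmall
  -- approximate ψ by an element of the countable dense set
  have hψS : ψ ∈ closure (Set.range e) := hSclos (hmemS φ Nt)
  obtain ⟨g, hgmem, hgdist⟩ := Metric.mem_closure_iff.1 hψS (ε/5) hε5
  obtain ⟨k, rfl⟩ := hgmem
  have hψek : ∀ a : 𝒜, |F a ψ - F a (e k)| < ε / 5 :=
    fun a => lt_of_le_of_lt (hlip a ψ (e k)) hgdist
  obtain ⟨N₀, hN₀⟩ := Metric.cauchySeq_iff.1 (hCk k) (ε/5) hε5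
  refine ⟨N₀, fun i hi j hj => ?_⟩
  have h3 : dist (F (α (n i)) (e k)) (F (α (n j)) (e k)) < ε / 5 := hN₀ i hi j hj
  rw [Real.dist_eq] at h3 ⊢
  have t1 := htrunc (α (n i))
  have t2 := hψek (α (n i))
  have t4 := hψek (α (n j))
  have t5 := htrunc (α (n j))
  have habs : |F (α (n i)) φ - F (α (n j)) φ| ≤
      |F (α (n i)) φ - F (α (n i)) ψ| + |F (α (n i)) ψ - F (α (n i)) (e k)| +
      |F (α (n i)) (e k) - F (α (n j)) (e k)| + |F (α (n j)) (e k) - F (α (n j)) ψ| +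
      |F (α (n j)) ψ - F (α (n j)) φ| := by
    calc |F (α (n i)) φ - F (α (n j)) φ|
        ≤ |F (α (n i)) φ - F (α (n i)) ψ| + |F (α (n i)) ψ - F (α (n j)) φ| :=
          abs_sub_le _ _ _
      _ ≤ |F (α (n i)) φ - F (α (n i)) ψ| +
          (|F (α (n i)) ψ - F (α (n i)) (e k)| + |F (α (n i)) (e k) - F (α (n j)) φ|) :=
          add_le_add_right (abs_sub_le _ _ _) _
      _ ≤ |F (α (n i)) φ - F (α (n i)) ψ| +
          (|F (α (n i)) ψ - F (α (n i)) (e k)| +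
            (|F (α (n i)) (e k) - F (α (n j)) (e k)| + |F (α (n j)) (e k) - F (α (n j)) φ|)) := by
          gcongr
          exact abs_sub_le _ _ _
      _ ≤ |F (α (n i)) φ - F (α (n i)) ψ| +
          (|F (α (n i)) ψ - F (α (n i)) (e k)| +
            (|F (α (n i)) (e k) - F (α (n j)) (e k)| +
              (|F (α (n j)) (e k) - F (α (n j)) ψ| + |F (α (n j)) ψ - F (α (n j)) φ|))) := by
          gcongr
          exact abs_sub_le _ _ _
      _ = _ := by ring
  have t4' : |F (α (n j)) (e k) - F (α (n j)) ψ| < ε / 5 := by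
    rw [abs_sub_comm]; exact t4
  have t5' : |F (α (n j)) ψ - F (α (n j)) φ| < ε / 5 := by
    rw [abs_sub_comm]; exact t5
  linarith
end
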